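/- arXiv:1211.6359 — 5 statements merged into one kernel-verified Lean document; each statement's English description precedes it below -/
import Mathlib

section
/- Every permutation π of [n], written as a word π(1)π(2)···π(n), admits a unique factorization p τ₁ τ₂ ··· τ_r (as a concatenation of consecutive factors) where p is an increasing word (possibly empty) and each τ_i is a hook. -/
namespace QEuler

/-- inversion number of a word -/
def invL : List ℕ → ℕ
  | [] => 0
  | a :: l => l.countP (fun b => decide (b < a)) + invL l

/-- descent set positions (1-indexed) of a word -/
def descSet (w : List ℕ) : List ℕ :=
  (List.range (w.length - 1)).filter (fun i => decide (w.getD (i+1) 0 < w.getD i 0))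

def desL (w : List ℕ) : ℕ := (descSet w).length

def majL (w : List ℕ) : ℕ := ((descSet w).map (· + 1)).sum

def IncreasingL (w : List ℕ) : Prop := w.Chain' (· < ·)

def IsHook (w : List ℕ) : Prop :=
  2 ≤ w.length ∧ w.getD 1 0 < w.getD 0 0 ∧ w.tail.Chain' (· < ·)

def lastDesc (w : List ℕ) : Option ℕ := (descSet w).max?

/-- hook factorization: increasing prefix and list of hooks -/
def hookAux : ℕ → List ℕ → List ℕ × List (List ℕ)
  | 0, w => (w, [])
  | fuel+1, w =>
    match lastDesc w with
    | none => (w, [])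
    | some i =>
      let r := hookAux fuel (w.take i)
      (r.1, r.2 ++ [w.drop i])

def hookFact (w : List ℕ) : List ℕ × List (List ℕ) := hookAux w.length w

def pixL (w : List ℕ) : ℕ := (hookFact w).1.length

def lecL (w : List ℕ) : ℕ := ((hookFact w).2.map invL).sum

/-- rightmost index of the maximum letter -/
def rmax (w : List ℕ) : ℕ := (w.length - 1) - (w.reverse.idxOf (w.foldr max 0))

def rixAux : ℕ → List ℕ → ℕ
  | 0, _ => 0
  | fuel+1, w =>
    if w = [] then 0
    else
      let i := rmax w
      if i + 1 = w.length then 1 + rixAux fuel (w.take (w.length - 1))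
      else if i = 0 then 0
      else rixAux fuel (w.drop (i+1))

def rixL (w : List ℕ) : ℕ := rixAux w.length w

/-- admissible inversions of a word (0-indexed pairs) -/
def aiL (w : List ℕ) : ℕ :=
  ((Finset.range w.length ×ˢ Finset.range w.length).filter
    (fun p => p.1 < p.2 ∧ w.getD p.2 0 < w.getD p.1 0 ∧
      ((0 < p.1 ∧ w.getD (p.1 - 1) 0 < w.getD p.1 0) ∨
        ∃ l ∈ Finset.Ioo p.1 p.2, w.getD p.1 0 < w.getD l 0))).card

/-- the word π(1)π(2)⋯π(n) of a permutation, with letters in {1,…,n} -/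
def word {n : ℕ} (π : Equiv.Perm (Fin n)) : List ℕ := List.ofFn (fun i => (π i : ℕ) + 1)

def des {n : ℕ} (π : Equiv.Perm (Fin n)) : ℕ := desL (word π)
def maj {n : ℕ} (π : Equiv.Perm (Fin n)) : ℕ := majL (word π)
def inv {n : ℕ} (π : Equiv.Perm (Fin n)) : ℕ := invL (word π)
def lec {n : ℕ} (π : Equiv.Perm (Fin n)) : ℕ := lecL (word π)
def pix {n : ℕ} (π : Equiv.Perm (Fin n)) : ℕ := pixL (word π)
def rix {n : ℕ} (π : Equiv.Perm (Fin n)) : ℕ := rixL (word π)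
def ai  {n : ℕ} (π : Equiv.Perm (Fin n)) : ℕ := aiL (word π)

def exc {n : ℕ} (π : Equiv.Perm (Fin n)) : ℕ :=
  (Finset.univ.filter (fun i : Fin n => (i : ℕ) < (π i : ℕ))).card

def fixp {n : ℕ} (π : Equiv.Perm (Fin n)) : ℕ :=
  (Finset.univ.filter (fun i : Fin n => π i = i)).card

/-- (q;q)_n -/
noncomputable def qq (n : ℕ) : Polynomial ℚ :=
  ∏ i ∈ Finset.range n, (1 - Polynomial.X ^ (i+1))

/-- the q-binomial coefficient -/
noncomputable def qbinom (n k : ℕ) : Polynomial ℚ :=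
  if k ≤ n then qq n / (qq (n-k) * qq k) else 0


instance : DecidablePred IncreasingL :=
  fun w => inferInstanceAs (Decidable (w.IsChain (· < ·)))

/-- `(maj−exc,exc)` q-Eulerian numbers `A_{n,k}(q)` -/
noncomputable def Amaj (n k : ℕ) : Polynomial ℚ :=
  ∑ π ∈ Finset.univ.filter (fun π : Equiv.Perm (Fin n) => exc π = k),
    Polynomial.X ^ (maj π - exc π)

/-- fixed point q-Eulerian numbers `A_{n,k}^{(j)}(q)` via `(maj−exc,exc,fix)` -/
noncomputable def Amajfix (n k j : ℕ) : Polynomial ℚ :=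
  ∑ π ∈ Finset.univ.filter (fun π : Equiv.Perm (Fin n) => exc π = k ∧ fixp π = j),
    Polynomial.X ^ (maj π - exc π)

/-- q-Eulerian numbers via `(inv−lec,lec)` -/
noncomputable def Alec (n k : ℕ) : Polynomial ℚ :=
  ∑ π ∈ Finset.univ.filter (fun π : Equiv.Perm (Fin n) => lec π = k),
    Polynomial.X ^ (inv π - lec π)

/-- fixed point q-Eulerian numbers via `(inv−lec,lec,pix)` -/
noncomputable def Alecpix (n k j : ℕ) : Polynomial ℚ :=
  ∑ π ∈ Finset.univ.filter (fun π : Equiv.Perm (Fin n) => lec π = k ∧ pix π = j),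
    Polynomial.X ^ (inv π - lec π)

lemma hook_not_chain {τ : List ℕ} (h : IsHook τ) : ¬ τ.Chain' (· < ·) := by
  obtain ⟨hlen, hdesc, -⟩ := h
  match τ with
  | [] => simp at hlen
  | [a] => simp at hlen
  | a :: b :: t =>
    simp only [List.getD_cons_zero, List.getD_cons_succ] at hdesc
    intro hc
    unfold List.Chain' at hc
    rw [List.isChain_cons_cons] at hc
    omega

lemma hook_aux : ∀ fuel : ℕ, ∀ w : List ℕ, w.length ≤ fuel → w.Nodup →
    ∃! pt : List ℕ × List (List ℕ),
      IncreasingL pt.1 ∧ (∀ τ ∈ pt.2, IsHook τ) ∧ pt.1 ++ pt.2.flatten = w := by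
  intro fuel
  induction fuel with
  | zero =>
    intro w hw _
    have : w = [] := List.eq_nil_of_length_eq_zero (Nat.le_zero.mp hw)
    subst this
    refine ⟨([], []), ⟨List.isChain_nil, by simp, by simp⟩, ?_⟩
    rintro ⟨p, ts⟩ ⟨hp, hts, heq⟩
    simp only [List.append_eq_nil_iff] at heq
    obtain ⟨hp0, hts0⟩ := heq
    have : ts = [] := by
      cases ts with
      | nil => rfl
      | cons a l =>
        exfalso
        have := hts a (by simp)
        have h2 := this.1
        have : a <:+: (a :: l).flatten := List.infix_of_mem_flatten (by simp)
        rw [hts0] at this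
        have := List.eq_nil_of_infix_nil this
        simp [this] at h2
    simp [hp0, this]
  | succ fuel ih =>
    intro w hw hnd
    by_cases hc : w.Chain' (· < ·)
    · -- increasing case: unique factorization is (w, [])
      refine ⟨(w, []), ⟨hc, by simp, by simp⟩, ?_⟩
      rintro ⟨p, ts⟩ ⟨hp, hts, heq⟩
      have hts0 : ts = [] := by
        by_contra hne
        obtain ⟨τ, hτ⟩ := List.exists_mem_of_ne_nil ts hne
        have hinf : τ <:+: w := by
          rw [← heq]
          exact (List.infix_of_mem_flatten hτ).trans (List.suffix_append p ts.flatten).isInfix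
        exact hook_not_chain (hts τ hτ) (hc.infix hinf)
      subst hts0
      simp only [List.flatten_nil, List.append_nil] at heq
      simp [heq]
    · -- there is a descent; find the last one
      classical
      set P : ℕ → Prop := fun k => ¬ (w.drop k).Chain' (· < ·) with hP
      have hP0 : P 0 := by simpa [hP] using hc
      set i := Nat.findGreatest P w.length with hi
      have hPi : P i := Nat.findGreatest_spec (Nat.zero_le _) hP0
      have hgt : ∀ k, i < k → k ≤ w.length → ¬ P k := fun k hk hk' =>
        Nat.findGreatest_is_greatest hk hk'
      have hchain_succ : (w.drop (i + 1)).Chain' (· < ·) := by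
        by_cases h : i + 1 ≤ w.length
        · have := hgt (i + 1) (Nat.lt_succ_self i) h
          simpa [hP] using this
        · rw [List.drop_eq_nil_of_le (by omega)]; exact List.isChain_nil
      have hPi' : ¬ (w.drop i).Chain' (· < ·) := hPi
      have hilt : i < w.length := by
        by_contra h
        push_neg at h
        rw [List.drop_eq_nil_of_le h] at hPi'
        exact hPi' List.isChain_nil
      have hdropi : w.drop i = w[i] :: w.drop (i + 1) := List.drop_eq_getElem_cons hilt
      have hi1lt : i + 1 < w.length := by
        by_contra h
        push_neg at h
        have : w.drop (i+1) = [] := List.drop_eq_nil_of_le h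
        rw [hdropi, this] at hPi'
        exact hPi' (List.isChain_singleton _)
      have hdropi1 : w.drop (i+1) = w[i+1] :: w.drop (i + 2) := List.drop_eq_getElem_cons hi1lt
      have hne : w[i] ≠ w[i+1] := by
        intro h
        have := (List.Nodup.getElem_inj_iff hnd).mp h
        omega
      have hdesc : w[i+1] < w[i] := by
        by_contra h
        push_neg at h
        apply hPi'
        rw [hdropi, hdropi1]; unfold List.Chain'; rw [List.isChain_cons_cons]
        exact ⟨lt_of_le_of_ne h hne, hdropi1 ▸ hchain_succ⟩
      have hhook : IsHook (w.drop i) := by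
        refine ⟨by rw [List.length_drop]; omega, ?_, ?_⟩
        · rw [hdropi, hdropi1]
          simp only [List.getD_cons_zero, List.getD_cons_succ]
          exact hdesc
        · rw [hdropi]
          simpa using hchain_succ
      -- induction on the prefix
      have htake_len : (w.take i).length = i := by simp; omega
      have hIH := ih (w.take i) (by omega) (hnd.sublist (List.take_sublist i w))
      obtain ⟨⟨p, ts⟩, ⟨hp, hts, heq⟩, huniq⟩ := hIH
      refine ⟨(p, ts ++ [w.drop i]), ⟨hp, ?_, ?_⟩, ?_⟩
      · intro τ hτ
        rcases List.mem_append.mp hτ with h | h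
        · exact hts τ h
        · simp at h; subst h; exact hhook
      · simp only [List.flatten_append, List.flatten_cons, List.flatten_nil,
          List.append_nil, ← List.append_assoc, heq]
        exact List.take_append_drop i w
      · rintro ⟨p', ts'⟩ ⟨hp', hts', heq'⟩
        -- ts' is nonempty
        have hts'ne : ts' ≠ [] := by
          intro h
          subst h
          simp only [List.flatten_nil, List.append_nil] at heq'
          exact hc (heq' ▸ hp')
        obtain ⟨ts'', τ', hsplit⟩ := List.eq_nil_or_concat ts' |>.resolve_left hts'ne
        subst hsplit
        have hτ'hook : IsHook τ' := hts' τ' (by simp)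
        -- τ' is a suffix of w of positive length; let j be its start
        have heq'' : (p' ++ ts''.flatten) ++ τ' = w := by
          simpa [List.flatten_append, ← List.append_assoc] using heq'
        set j := (p' ++ ts''.flatten).length with hj
        have hjlen : j + τ'.length = w.length := by
          rw [← heq'']; simp [hj]; omega
        have hτ'drop : τ' = w.drop j := by
          rw [← heq'', List.drop_left]
        have hτ'len : 2 ≤ τ'.length := hτ'hook.1
        -- P j holds
        have hPj : P j := by
          show ¬ (w.drop j).Chain' (· < ·)
          rw [← hτ'drop]
          exact hook_not_chain hτ'hook
        have hjle : j ≤ i := Nat.le_findGreatest (by omega) hPj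
        have hji : j = i := by
          by_contra hne'
          have hji' : j + 1 ≤ i := by omega
          apply hPi'
          have : w.drop i = (w.drop (j+1)).drop (i - (j+1)) := by
            rw [List.drop_drop]; congr 1; omega
          rw [this]
          apply List.IsChain.drop
          have : w.drop (j+1) = τ'.tail := by
            rw [hτ'drop, List.tail_drop]
          rw [this]
          exact hτ'hook.2.2
        -- hence τ' = w.drop i and (p', ts'') factors w.take i
        have hτ'eq : τ' = w.drop i := by rw [hτ'drop, hji]
        have hpre : p' ++ ts''.flatten = w.take i := by
          have h1 : (p' ++ ts''.flatten) ++ τ' = w.take i ++ w.drop i := by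
            rw [heq'', List.take_append_drop]
          have h2 : (p' ++ ts''.flatten).length = (w.take i).length := by
            rw [htake_len, ← hj, hji]
          exact (List.append_inj h1 h2).1
        have := huniq (p', ts'') ⟨hp', fun τ hτ => hts' τ (by simp [hτ]), hpre⟩
        have hpp : p' = p ∧ ts'' = ts := by
          constructor
          · exact congrArg Prod.fst this
          · exact congrArg Prod.snd this
        simp [hpp.1, hpp.2, hτ'eq]

/-- Every permutation word admits a unique hook factorization: an increasing word
followed by a sequence of hooks. -/
theorem hook_factorization_exists_unique (n : ℕ) (π : Equiv.Perm (Fin n)) :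
    ∃! pt : List ℕ × List (List ℕ),
      IncreasingL pt.1 ∧ (∀ τ ∈ pt.2, IsHook τ) ∧ pt.1 ++ pt.2.flatten = word π := by
  apply hook_aux (word π).length _ le_rfl
  rw [word, List.nodup_ofFn]
  intro a b hab
  have hab' : ((π a : ℕ)) + 1 = ((π b : ℕ)) + 1 := hab
  exact π.injective (Fin.ext (by omega))

end QEuler
end

section
/- For any hook τ with m distinct letters and inv(τ) = k inversions, there exists a unique hook τ' with the same set of letters as τ such that inv(τ') = m − k. -/
namespace QEuler

lemma invL_eq_zero {l : List ℕ} (h : l.Chain' (· < ·)) : invL l = 0 := by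
  induction l with
  | nil => rfl
  | cons a t ih =>
    have hp := (List.isChain_iff_pairwise.mp h)
    rw [List.pairwise_cons] at hp
    have h0 : t.countP (fun b => decide (b < a)) = 0 :=
      List.countP_eq_zero.mpr (fun b hb => by simpa using Nat.not_lt.mpr (hp.1 b hb).le)
    simp [invL, h0, ih h.tail]

lemma invL_hook {a : ℕ} {t : List ℕ} (h : t.Chain' (· < ·)) :
    invL (a :: t) = t.countP (fun b => decide (b < a)) := by
  simp [invL, invL_eq_zero h]

lemma countP_lt_getD : ∀ (L : List ℕ), L.Chain' (· < ·) → ∀ i < L.length,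
    L.countP (fun b => decide (b < L.getD i 0)) = i := by
  intro L
  induction L with
  | nil => intro _ i hi; simp at hi
  | cons x L' ih =>
    intro h i hi
    have hp := (List.isChain_iff_pairwise.mp h)
    rw [List.pairwise_cons] at hp
    cases i with
    | zero =>
      apply List.countP_eq_zero.mpr
      intro b hb
      rcases List.mem_cons.mp hb with rfl | hb'
      · simp
      · simpa using Nat.not_lt.mpr (hp.1 b hb').le
    | succ j =>
      have hj : j < L'.length := by simpa using hi
      have hg : (x :: L').getD (j+1) 0 = L'.getD j 0 := rfl
      have hmem : L'.getD j 0 ∈ L' := by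
        rw [List.getD_eq_getElem _ _ hj]; exact List.getElem_mem hj
      have hx : x < L'.getD j 0 := hp.1 _ hmem
      rw [hg, List.countP_cons]
      simp only [decide_eq_true_eq, hx, if_true]
      rw [ih h.tail j hj]

lemma getD_countP_of_mem {L : List ℕ} (h : L.Chain' (· < ·)) {x : ℕ} (hx : x ∈ L) :
    L.getD (L.countP (fun b => decide (b < x))) 0 = x := by
  obtain ⟨i, hi, rfl⟩ := List.getElem_of_mem hx
  have hg : L.getD i 0 = L[i] := List.getD_eq_getElem _ _ hi
  rw [← hg, countP_lt_getD L h i hi, hg]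

lemma hook_shape {w : List ℕ} (h : IsHook w) :
    ∃ a t, w = a :: t ∧ t.Chain' (· < ·) ∧ 1 ≤ t.length ∧ t.getD 0 0 < a := by
  match w, h with
  | a :: t, ⟨h1, h2, h3⟩ =>
    exact ⟨a, t, rfl, h3, by simpa using h1, h2⟩

lemma hook_main (τ : List ℕ) (m k : ℕ)
    (hhook : IsHook τ)
    (hnd : τ.Nodup) (hm : τ.length = m) (hk : invL τ = k) :
    ∃! τ' : List ℕ, τ'.Perm τ ∧ IsHook τ' ∧ invL τ' = m - k := by
  classical
  -- sorted version
  set L := τ.insertionSort (· ≤ ·) with hLdef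
  have hLp : L.Perm τ := List.perm_insertionSort _ τ
  have hLs : L.Pairwise (· ≤ ·) := List.pairwise_insertionSort _ τ
  have hLnd : L.Nodup := (hLp.nodup_iff).mpr hnd
  have hLlt : L.Pairwise (· < ·) := List.Pairwise.imp (fun h => lt_of_le_of_ne h.1 h.2) (hLs.and hLnd)
  have hLc : L.Chain' (· < ·) := List.isChain_iff_pairwise.mpr hLlt
  have hLlen : L.length = m := hLp.length_eq.trans hm
  -- bounds on k
  obtain ⟨a, t, rfl, ht, htlen, hhd⟩ := hook_shape hhook
  have hkval : t.countP (fun b => decide (b < a)) = k := by rw [← hk, invL_hook ht]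
  have hk1 : 1 ≤ k := by
    rw [← hkval]
    apply List.countP_pos_iff.mpr
    refine ⟨t.getD 0 0, ?_, by simpa using hhd⟩
    rw [List.getD_eq_getElem _ _ (by omega)]
    exact List.getElem_mem _
  have hkm : k ≤ m - 1 := by
    have := List.countP_le_length (l := t) (p := fun b => decide (b < a))
    have hlt : t.length = m - 1 := by simp at hm; omega
    omega
  have hm2 : 2 ≤ m := hm ▸ hhook.1
  set i := m - k with hidef
  have hi1 : 1 ≤ i := by omega
  have hilt : i < L.length := by omega
  set a' := L.getD i 0 with ha'def
  set t' := L.eraseIdx i with ht'def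
  -- structure of L
  have hLsplit : L = L.take i ++ L[i] :: L.drop (i+1) := by
    conv_lhs => rw [← List.take_append_drop i L, List.drop_eq_getElem_cons hilt]
  have hgi : a' = L[i] := List.getD_eq_getElem _ _ hilt
  have ht'eq : t' = L.take i ++ L.drop (i+1) := List.eraseIdx_eq_take_drop_succ L i
  have hperm' : (a' :: t').Perm L := by
    rw [ht'eq, hgi]
    conv_rhs => rw [hLsplit]
    exact List.perm_middle.symm
  have ht'c : t'.Chain' (· < ·) := by
    apply List.isChain_iff_pairwise.mpr
    exact (List.isChain_iff_pairwise.mp hLc).sublist (List.eraseIdx_sublist L i)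
  have ht'len : t'.length = m - 1 := by
    rw [ht'def, List.length_eraseIdx_of_lt hilt, hLlen]
  -- head of t' is L[0], which is < a'
  have hhd' : t'.getD 0 0 < a' := by
    have h0i : L.getD 0 0 < a' := by
      rw [hgi, List.getD_eq_getElem _ _ (by omega)]
      exact List.pairwise_iff_getElem.mp hLlt 0 i (by omega) hilt (by omega)
    have : t'.getD 0 0 = L.getD 0 0 := by
      match L, i, hi1, hilt with
      | x :: L'', j+1, _, _ => simp [ht'def]
    omega
  have hcount' : ∀ x ∈ L, ∀ s : List ℕ, (x :: s).Perm L →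
      s.countP (fun b => decide (b < x)) = L.countP (fun b => decide (b < x)) := by
    intro x hx s hs
    have := hs.countP_eq (fun b => decide (b < x))
    rw [List.countP_cons] at this
    simpa using this
  have hinv' : invL (a' :: t') = i := by
    rw [invL_hook ht'c]
    have hmem : a' ∈ L := by
      rw [hgi]; exact List.getElem_mem hilt
    rw [hcount' a' hmem t' hperm', countP_lt_getD L hLc i hilt]
  refine ⟨a' :: t', ⟨hperm'.trans hLp, ⟨⟨by simp; omega, by simpa using hhd', by simpa using ht'c⟩,
    hinv'⟩⟩, ?_⟩
  -- uniqueness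
  rintro σ ⟨hσperm, hσhook, hσinv⟩
  obtain ⟨b, s, rfl, hs, hslen, hshd⟩ := hook_shape hσhook
  have hbL : b ∈ L := hLp.symm.subset (hσperm.subset (by simp))
  have hbperm : (b :: s).Perm L := hσperm.trans hLp.symm
  have hbcount : L.countP (fun b' => decide (b' < b)) = i := by
    rw [← hcount' b hbL s hbperm, ← invL_hook hs, hσinv]
  have hba : b = a' := by
    have := getD_countP_of_mem hLc hbL
    rw [hbcount] at this
    exact this.symm
  subst hba
  have htperm : s.Perm t' := (List.perm_cons a').mp (hbperm.trans hperm'.symm)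
  have hs1 : s.Pairwise (· ≤ ·) :=
    List.Pairwise.imp (fun h => le_of_lt h) (List.isChain_iff_pairwise.mp hs)
  have hs2 : t'.Pairwise (· ≤ ·) :=
    List.Pairwise.imp (fun h => le_of_lt h) (List.isChain_iff_pairwise.mp ht'c)
  rw [List.Perm.eq_of_pairwise' hs1 hs2 htperm]

/-- For a hook `τ` with `m` distinct letters and `k` inversions there is a unique hook
with the same letters and `m - k` inversions. -/
theorem hook_complement_exists_unique (τ : List ℕ) (m k : ℕ)
    (hhook : IsHook τ) (hnd : τ.Nodup) (hm : τ.length = m) (hk : invL τ = k) :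
    ∃! τ' : List ℕ, τ'.Perm τ ∧ IsHook τ' ∧ invL τ' = m - k := by
  exact hook_main τ m k hhook hnd hm hk

end QEuler
end

section
/- For 1 < j < n, the restricted statistics are symmetric: the number of permutations π of [n] with π(j) = n and des(π) = k, counted with weight q^{ai(π)}, equals the same count with des(π) = n − 1 − k. That is, Σ_{π(j)=n, des π = k} q^{ai π} = Σ_{π(j)=n, des π = n−1−k} q^{ai π}. -/
namespace QEuler

lemma desL_nil : desL [] = 0 := rfl
lemma desL_single (a : ℕ) : desL [a] = 0 := rfl

lemma desL_cons_cons (a b : ℕ) (l : List ℕ) :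
    desL (a :: b :: l) = (if b < a then 1 else 0) + desL (b :: l) := by
  unfold desL descSet
  simp only [List.length_cons, Nat.add_sub_cancel]
  rw [List.range_succ_eq_map, List.filter_cons, List.filter_map]
  have h2 : (fun i => decide ((a :: b :: l).getD (i+1) 0 < (a :: b :: l).getD i 0)) ∘ Nat.succ
      = (fun i => decide ((b :: l).getD (i+1) 0 < (b :: l).getD i 0)) := by
    funext i; rfl
  rw [h2]
  by_cases hba : b < a
  · simp [List.getD, hba, Nat.add_comm]
  · simp [List.getD, hba, Nat.add_comm]

lemma desL_le (w : List ℕ) : desL w ≤ w.length - 1 := by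
  unfold desL descSet
  calc ((List.range (w.length - 1)).filter _).length ≤ (List.range (w.length-1)).length :=
        List.length_filter_le _ _
    _ = w.length - 1 := List.length_range

lemma desL_append_max (u v : List ℕ) (M : ℕ) (hu : ∀ a ∈ u, a < M) (hv : ∀ a ∈ v, a < M) :
    desL (u ++ M :: v) = desL u + desL v + (if v = [] then 0 else 1) := by
  induction u with
  | nil =>
    simp only [List.nil_append, desL_nil, Nat.zero_add]
    cases v with
    | nil => simp [desL_single, desL_nil]
    | cons y l =>
      rw [desL_cons_cons]
      have hy : y < M := hv y (by simp)
      simp [hy, Nat.add_comm]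
  | cons a u' ih =>
    have ha : a < M := hu a (by simp)
    have hu' : ∀ b ∈ u', b < M := fun b hb => hu b (by simp [hb])
    cases u' with
    | nil =>
      simp only [List.nil_append, List.cons_append]
      rw [desL_cons_cons]
      have : ¬ M < a := by omega
      simp only [this, if_false, Nat.zero_add, desL_single]
      have := ih hu'
      simp only [List.nil_append] at this
      rw [this]
      simp [desL_nil]
    | cons b u'' =>
      simp only [List.cons_append] at ih ⊢
      rw [desL_cons_cons, desL_cons_cons, ih hu']
      ring


def aiCond (w : List ℕ) (i j : ℕ) : Prop :=
  i < j ∧ w.getD j 0 < w.getD i 0 ∧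
    ((0 < i ∧ w.getD (i - 1) 0 < w.getD i 0) ∨
      ∃ l ∈ Finset.Ioo i j, w.getD i 0 < w.getD l 0)

instance aiCondDec (w : List ℕ) (i j : ℕ) : Decidable (aiCond w i j) := by
  unfold aiCond; infer_instance

lemma aiL_eq_sum (w : List ℕ) :
    aiL w = ∑ i ∈ Finset.range w.length, ∑ j ∈ Finset.range w.length,
      if aiCond w i j then 1 else 0 := by
  unfold aiL
  rw [Finset.card_filter, Finset.sum_product]
  rfl

lemma getD_mem (w : List ℕ) (i : ℕ) (h : i < w.length) : w.getD i 0 ∈ w := by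
  rw [List.getD_eq_getElem?_getD, List.getElem?_eq_getElem h]
  exact List.getElem_mem h

def crossL (u v : List ℕ) : ℕ :=
  ∑ i ∈ Finset.range u.length, ∑ t ∈ Finset.range v.length,
    if v.getD t 0 < u.getD i 0 then 1 else 0

lemma aiL_append_max (u v : List ℕ) (M : ℕ) (hu : ∀ a ∈ u, a < M) (hv : ∀ a ∈ v, a < M) :
    aiL (u ++ M :: v) = aiL u + aiL v + crossL u v + (if u = [] then 0 else v.length) := by
  have hp : (u ++ M :: v).length = u.length + (1 + v.length) := by simp; omega
  set p := u.length with hpdef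
  set q := v.length with hqdef
  have gW1 : ∀ i < p, (u ++ M :: v).getD i 0 = u.getD i 0 :=
    fun i hi => List.getD_append _ _ _ _ hi
  have gW2 : (u ++ M :: v).getD p 0 = M := by
    rw [List.getD_append_right _ _ _ _ (le_refl _)]
    simp
  have gW3 : ∀ t, (u ++ M :: v).getD (p + 1 + t) 0 = v.getD t 0 := by
    intro t
    rw [List.getD_append_right _ _ _ _ (by omega : u.length ≤ p + 1 + t)]
    have h2 : p + 1 + t - u.length = t + 1 := by omega
    rw [h2]
    rfl
  have gWle : ∀ l < p + 1 + q, (u ++ M :: v).getD l 0 ≤ M := by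
    intro l hl
    have hmem := getD_mem (u ++ M :: v) l (by omega)
    rcases List.mem_append.1 hmem with h | h
    · exact le_of_lt (hu _ h)
    · rcases List.mem_cons.1 h with h | h
      · omega
      · exact le_of_lt (hv _ h)
  have hmemu : ∀ i < p, u.getD i 0 < M := fun i hi => hu _ (getD_mem u i hi)
  have hmemv : ∀ t < q, v.getD t 0 < M := fun t ht => hv _ (getD_mem v t ht)
  -- pointwise iffs
  have hiff1 : ∀ i < p, ∀ j < p, (aiCond (u ++ M :: v) i j ↔ aiCond u i j) := by
    intro i hi j hj
    unfold aiCond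
    rw [gW1 i hi, gW1 j hj]
    refine and_congr Iff.rfl (and_congr Iff.rfl (or_congr ?_ ?_))
    · constructor
      · rintro ⟨h0, h⟩; exact ⟨h0, by rwa [gW1 (i-1) (by omega)] at h⟩
      · rintro ⟨h0, h⟩; exact ⟨h0, by rwa [gW1 (i-1) (by omega)]⟩
    · constructor
      · rintro ⟨l, hl, h⟩
        have hlj : l < j := (Finset.mem_Ioo.1 hl).2
        exact ⟨l, hl, by rwa [gW1 l (by omega)] at h⟩
      · rintro ⟨l, hl, h⟩
        have hlj : l < j := (Finset.mem_Ioo.1 hl).2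
        exact ⟨l, hl, by rwa [gW1 l (by omega)]⟩
  have hzero2 : ∀ i < p, ¬ aiCond (u ++ M :: v) i p := by
    intro i hi hc
    rcases hc with ⟨-, hinv, -⟩
    rw [gW2, gW1 i hi] at hinv
    exact absurd hinv (by have := hmemu i hi; omega)
  have hiff3 : ∀ i < p, ∀ t < q,
      (aiCond (u ++ M :: v) i (p + 1 + t) ↔ v.getD t 0 < u.getD i 0) := by
    intro i hi t ht
    constructor
    · rintro ⟨-, hinv, -⟩
      rwa [gW3 t, gW1 i hi] at hinv
    · intro h
      refine ⟨by omega, by rw [gW3 t, gW1 i hi]; exact h, Or.inr ⟨p, Finset.mem_Ioo.2 ⟨hi, by omega⟩, ?_⟩⟩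
      rw [gW1 i hi, gW2]
      exact hmemu i hi
  have hiff4 : ∀ t < q, (aiCond (u ++ M :: v) p (p + 1 + t) ↔ 0 < p) := by
    intro t ht
    constructor
    · rintro ⟨-, -, hadm⟩
      rcases hadm with ⟨h0, -⟩ | ⟨l, hl, h⟩
      · exact h0
      · exfalso
        rw [gW2] at h
        rcases Finset.mem_Ioo.1 hl with ⟨-, hl2⟩
        have := gWle l (by omega)
        omega
    · intro h0
      refine ⟨by omega, by rw [gW2, gW3 t]; exact hmemv t ht, Or.inl ⟨h0, ?_⟩⟩
      rw [gW2, gW1 (p-1) (by omega)]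
      exact hmemu _ (by omega)
  have hiff6 : ∀ s < q, ∀ t < q,
      (aiCond (u ++ M :: v) (p + 1 + s) (p + 1 + t) ↔ aiCond v s t) := by
    intro s hs t ht
    unfold aiCond
    rw [gW3 s, gW3 t]
    refine and_congr (by omega) (and_congr Iff.rfl (or_congr ?_ ?_))
    · rcases Nat.eq_zero_or_pos s with hs0 | hs0
      · subst hs0
        have h1 : p + 1 + 0 - 1 = p := by omega
        rw [h1, gW2]
        have h2 := hmemv 0 hs
        constructor
        · rintro ⟨-, h⟩; omega
        · rintro ⟨h, -⟩; omega
      · have : p + 1 + s - 1 = p + 1 + (s - 1) := by omega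
        rw [this, gW3 (s-1)]
        constructor
        · rintro ⟨-, h⟩; exact ⟨hs0, h⟩
        · rintro ⟨-, h⟩; exact ⟨by omega, h⟩
    · constructor
      · rintro ⟨l, hl, h⟩
        rcases Finset.mem_Ioo.1 hl with ⟨hl1, hl2⟩
        refine ⟨l - (p+1), Finset.mem_Ioo.2 ⟨by omega, by omega⟩, ?_⟩
        have : p + 1 + (l - (p+1)) = l := by omega
        rwa [← this, gW3 (l - (p+1))] at h
      · rintro ⟨r, hr, h⟩
        rcases Finset.mem_Ioo.1 hr with ⟨hr1, hr2⟩
        exact ⟨p + 1 + r, Finset.mem_Ioo.2 ⟨by omega, by omega⟩, by rwa [gW3 r]⟩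
  have hlow : ∀ i j : ℕ, j ≤ i → ¬ aiCond (u ++ M :: v) i j := by
    rintro i j hle ⟨hij, -, -⟩; omega
  -- now compute
  rw [aiL_eq_sum, hp]
  rw [Finset.sum_range_add]
  have inner_split : ∀ g : ℕ → ℕ, (∑ j ∈ Finset.range (p + (1 + q)), g j)
      = (∑ j ∈ Finset.range p, g j) + (g p + ∑ t ∈ Finset.range q, g (p + 1 + t)) := by
    intro g
    rw [Finset.sum_range_add, Finset.sum_range_add, Finset.sum_range_one]
    simp only [Nat.add_zero, ← Nat.add_assoc]
  have block1 : (∑ i ∈ Finset.range p, ∑ j ∈ Finset.range (p + (1+q)),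
      if aiCond (u ++ M :: v) i j then 1 else 0) = aiL u + crossL u v := by
    rw [aiL_eq_sum, ← hpdef]
    unfold crossL
    rw [← hpdef, ← hqdef, ← Finset.sum_add_distrib]
    refine Finset.sum_congr rfl fun i hi => ?_
    have hi' := Finset.mem_range.1 hi
    rw [inner_split]
    have e1 : (∑ j ∈ Finset.range p, if aiCond (u ++ M :: v) i j then 1 else 0)
        = ∑ j ∈ Finset.range p, if aiCond u i j then 1 else 0 :=
      Finset.sum_congr rfl fun j hj => if_congr (hiff1 i hi' j (Finset.mem_range.1 hj)) rfl rfl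
    have e2 : (if aiCond (u ++ M :: v) i p then 1 else 0) = 0 := by
      simp [hzero2 i hi']
    have e3 : (∑ t ∈ Finset.range q, if aiCond (u ++ M :: v) i (p + 1 + t) then 1 else 0)
        = ∑ t ∈ Finset.range q, if v.getD t 0 < u.getD i 0 then 1 else 0 :=
      Finset.sum_congr rfl fun t ht => if_congr (hiff3 i hi' t (Finset.mem_range.1 ht)) rfl rfl
    rw [e1, e2, e3]
    omega
  have block23 : (∑ x ∈ Finset.range (1 + q), ∑ j ∈ Finset.range (p + (1+q)),
      if aiCond (u ++ M :: v) (p + x) j then 1 else 0)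
      = aiL v + (if u = [] then 0 else q) := by
    rw [Finset.sum_range_add, Finset.sum_range_one, Nat.add_zero]
    have rowp : (∑ j ∈ Finset.range (p + (1+q)), if aiCond (u ++ M :: v) p j then 1 else 0)
        = if u = [] then 0 else q := by
      rw [inner_split]
      have e1 : (∑ j ∈ Finset.range p, if aiCond (u ++ M :: v) p j then 1 else 0) = 0 := by
        refine Finset.sum_eq_zero fun j hj => ?_
        simp [hlow p j (le_of_lt (Finset.mem_range.1 hj))]
      have e2 : (if aiCond (u ++ M :: v) p p then 1 else 0) = 0 := by
        simp [hlow p p (le_refl p)]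
      have e3 : (∑ t ∈ Finset.range q, if aiCond (u ++ M :: v) p (p + 1 + t) then 1 else 0)
          = if u = [] then 0 else q := by
        have : ∀ t ∈ Finset.range q, (if aiCond (u ++ M :: v) p (p + 1 + t) then 1 else 0)
            = if u = [] then 0 else 1 := by
          intro t ht
          rw [if_congr (hiff4 t (Finset.mem_range.1 ht)) rfl rfl]
          by_cases hunil : u = []
          · simp [hunil, hpdef]
          · have hpos : 0 < p := by
              rw [hpdef]
              exact List.length_pos_iff.2 hunil
            simp [hunil, hpos]
        rw [Finset.sum_congr rfl this]
        by_cases hunil : u = []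
        · simp [hunil]
        · simp [hunil]
      rw [e1, e2, e3]
      omega
    have rows_v : (∑ x ∈ Finset.range q, ∑ j ∈ Finset.range (p + (1+q)),
        if aiCond (u ++ M :: v) (p + (1 + x)) j then 1 else 0) = aiL v := by
      rw [aiL_eq_sum, ← hqdef]
      refine Finset.sum_congr rfl fun s hs => ?_
      have hs' := Finset.mem_range.1 hs
      have harith : p + (1 + s) = p + 1 + s := by omega
      rw [harith, inner_split]
      have e1 : (∑ j ∈ Finset.range p, if aiCond (u ++ M :: v) (p+1+s) j then 1 else 0) = 0 := by
        refine Finset.sum_eq_zero fun j hj => ?_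
        have := Finset.mem_range.1 hj
        simp [hlow (p+1+s) j (by omega)]
      have e2 : (if aiCond (u ++ M :: v) (p+1+s) p then 1 else 0) = 0 := by
        simp [hlow (p+1+s) p (by omega)]
      have e3 : (∑ t ∈ Finset.range q, if aiCond (u ++ M :: v) (p+1+s) (p + 1 + t) then 1 else 0)
          = ∑ t ∈ Finset.range q, if aiCond v s t then 1 else 0 :=
        Finset.sum_congr rfl fun t ht => if_congr (hiff6 s hs' t (Finset.mem_range.1 ht)) rfl rfl
      rw [e1, e2, e3]
      omega
    rw [rowp, rows_v]
    omega
  rw [block1, block23]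
  omega

lemma sum_getD_map {M : Type*} [AddCommMonoid M] (v : List ℕ) (f : ℕ → M) :
    ∑ t ∈ Finset.range v.length, f (v.getD t 0) = (v.map f).sum := by
  induction v with
  | nil => simp
  | cons a v ih =>
    rw [List.length_cons, Finset.sum_range_succ']
    simp only [List.getD_cons_succ, List.getD_cons_zero, List.map_cons, List.sum_cons, ih]
    exact add_comm _ _

def crossM (c d : Multiset ℕ) : ℕ :=
  (c.map (fun a => (d.map (fun b => if b < a then 1 else 0)).sum)).sum

lemma crossL_eq (u v : List ℕ) : crossL u v = crossM ↑u ↑v := by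
  unfold crossL crossM
  have inner : ∀ a : ℕ, (∑ t ∈ Finset.range v.length, if v.getD t 0 < a then 1 else 0)
      = ((↑v : Multiset ℕ).map (fun b => if b < a then 1 else 0)).sum := by
    intro a
    rw [sum_getD_map v (fun b => if b < a then 1 else 0)]
    simp
  calc (∑ i ∈ Finset.range u.length, ∑ t ∈ Finset.range v.length,
          if v.getD t 0 < u.getD i 0 then 1 else 0)
      = ∑ i ∈ Finset.range u.length,
          ((↑v : Multiset ℕ).map (fun b => if b < u.getD i 0 then 1 else 0)).sum := by
        refine Finset.sum_congr rfl fun i _ => inner _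
    _ = (u.map (fun a => ((↑v : Multiset ℕ).map (fun b => if b < a then 1 else 0)).sum)).sum :=
        sum_getD_map u (fun a => ((↑v : Multiset ℕ).map (fun b => if b < a then 1 else 0)).sum)
    _ = _ := by simp

noncomputable def permsM (s : Multiset ℕ) : Finset (List ℕ) := s.toList.permutations.toFinset

lemma mem_permsM {s : Multiset ℕ} {w : List ℕ} : w ∈ permsM s ↔ (w : Multiset ℕ) = s := by
  rw [permsM, List.mem_toFinset, List.mem_permutations]
  constructor
  · intro h
    rw [← Multiset.coe_toList s, Multiset.coe_eq_coe]
    exact h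
  · intro h
    rw [← Multiset.coe_eq_coe, Multiset.coe_toList]
    exact h

lemma takeWhile_append_eq (M : ℕ) (u v : List ℕ) (hMu : M ∉ u) :
    (u ++ M :: v).takeWhile (· != M) = u ∧ (u ++ M :: v).dropWhile (· != M) = M :: v := by
  induction u with
  | nil => exact ⟨by simp, by simp⟩
  | cons a u ih =>
    have haM : a ≠ M := fun h => hMu (by simp [h])
    have ih' := ih (fun h => hMu (by simp [h]))
    simp only [List.cons_append, List.takeWhile, List.dropWhile]
    rw [show (a != M) = true by simp [haM]]
    simp [ih'.1, ih'.2]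

lemma split_at_mem (M : ℕ) (w : List ℕ) (hM : M ∈ w) :
    w.takeWhile (· != M) ++ M :: (w.dropWhile (· != M)).tail = w := by
  induction w with
  | nil => simp at hM
  | cons a w ih =>
    by_cases haM : a = M
    · subst haM
      simp [List.takeWhile, List.dropWhile]
    · have : M ∈ w := by rcases List.mem_cons.1 hM with h | h; exact absurd h.symm haM; exact h
      simp only [List.takeWhile, List.dropWhile]
      rw [show (a != M) = true by simp [haM]]
      simpa using ih this

lemma coe_append_cons (u v : List ℕ) (M : ℕ) :
    (↑(u ++ M :: v) : Multiset ℕ) = M ::ₘ (↑u + ↑v) := by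
  have h1 : (↑(u ++ M :: v) : Multiset ℕ) = ↑u + ↑(M :: v) := by
    rw [← Multiset.coe_add]
  rw [h1, ← Multiset.cons_coe, add_comm, Multiset.cons_add, add_comm]

lemma sum_perms_cons (M : ℕ) (s' : Multiset ℕ) (hM : M ∉ s') (f : List ℕ → Polynomial ℚ) :
    ∑ w ∈ permsM (M ::ₘ s'), f w
      = ∑ x ∈ (s'.powerset.toFinset).sigma
          (fun c => (permsM c) ×ˢ (permsM (s' - c))), f (x.2.1 ++ M :: x.2.2) := by
  refine Finset.sum_nbij'
    (i := fun w => ⟨↑(w.takeWhile (· != M)), (w.takeWhile (· != M), (w.dropWhile (· != M)).tail)⟩)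
    (j := fun x => x.2.1 ++ M :: x.2.2) ?_ ?_ ?_ ?_ ?_
  · intro w hw
    rw [mem_permsM] at hw
    have hMw : M ∈ w := by
      have : M ∈ (w : Multiset ℕ) := by rw [hw]; exact Multiset.mem_cons_self _ _
      exact this
    have hsplit := split_at_mem M w hMw
    have hcoe : M ::ₘ ((↑(w.takeWhile (· != M)) : Multiset ℕ) + ↑((w.dropWhile (· != M)).tail))
        = M ::ₘ s' := by
      rw [← coe_append_cons, hsplit, hw]
    have hcoe2 : (↑(w.takeWhile (· != M)) : Multiset ℕ) + ↑((w.dropWhile (· != M)).tail) = s' :=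
      (Multiset.cons_inj_right M).1 hcoe
    have hle : (↑(w.takeWhile (· != M)) : Multiset ℕ) ≤ s' := by
      rw [← hcoe2]; exact Multiset.le_add_right _ _
    rw [Finset.mem_sigma, Finset.mem_product]
    refine ⟨?_, ?_, ?_⟩
    · rw [Multiset.mem_toFinset, Multiset.mem_powerset]; exact hle
    · rw [mem_permsM]
    · rw [mem_permsM]
      exact eq_tsub_of_add_eq (by rw [add_comm]; exact hcoe2)
  · rintro ⟨c, u, v⟩ hx
    rw [Finset.mem_sigma, Finset.mem_product] at hx
    obtain ⟨hc, hu, hv⟩ := hx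
    dsimp only at hc hu hv ⊢
    rw [Multiset.mem_toFinset, Multiset.mem_powerset] at hc
    rw [mem_permsM] at hu hv ⊢
    rw [coe_append_cons, hu, hv, add_tsub_cancel_of_le hc]
  · intro w hw
    rw [mem_permsM] at hw
    have hMw : M ∈ w := by
      have : M ∈ (w : Multiset ℕ) := by rw [hw]; exact Multiset.mem_cons_self _ _
      exact this
    exact split_at_mem M w hMw
  · rintro ⟨c, u, v⟩ hx
    rw [Finset.mem_sigma, Finset.mem_product] at hx
    obtain ⟨hc, hu, hv⟩ := hx
    dsimp only at hc hu hv ⊢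
    rw [Multiset.mem_toFinset, Multiset.mem_powerset] at hc
    rw [mem_permsM] at hu hv
    have hMu : M ∉ u := by
      intro h
      apply hM
      have : M ∈ (↑u : Multiset ℕ) := h
      rw [hu] at this
      exact Multiset.mem_of_le hc this
    have h2 := takeWhile_append_eq M u v hMu
    subst hu
    simp only [h2.1, h2.2, List.tail_cons]
  · intro w hw
    rw [mem_permsM] at hw
    have hMw : M ∈ w := by
      have : M ∈ (w : Multiset ℕ) := by rw [hw]; exact Multiset.mem_cons_self _ _
      exact this
    rw [split_at_mem M w hMw]




noncomputable def F (s : Multiset ℕ) (k : ℕ) : Polynomial ℚ :=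
  ∑ w ∈ permsM s, if desL w = k then (Polynomial.X : Polynomial ℚ) ^ aiL w else 0

lemma aiL_nil : aiL [] = 0 := rfl

lemma F_eq_zero (s : Multiset ℕ) (k : ℕ) (hs : s ≠ 0) (hk : Multiset.card s ≤ k) : F s k = 0 := by
  refine Finset.sum_eq_zero fun w hw => ?_
  rw [mem_permsM] at hw
  have hlen : w.length = Multiset.card s := by rw [← hw]; simp
  have h1 := desL_le w
  have hw0 : w.length ≠ 0 := by
    intro h0
    apply hs
    rw [← hw, List.length_eq_zero_iff.1 h0]
    rfl
  rw [if_neg (by omega)]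

lemma permsM_zero : permsM (0 : Multiset ℕ) = {[]} := by
  ext w
  rw [mem_permsM, Finset.mem_singleton, Multiset.coe_eq_zero]

lemma F_cons (M : ℕ) (s' : Multiset ℕ) (hM : M ∉ s') (hlt : ∀ a ∈ s', a < M) (k : ℕ) :
    F (M ::ₘ s') k = ∑ c ∈ s'.powerset.toFinset,
      (Polynomial.X : Polynomial ℚ) ^ (crossM c (s' - c)) *
        ∑ u ∈ permsM c, ∑ v ∈ permsM (s' - c),
          (if desL u + desL v + (if v = [] then 0 else 1) = k
          then (Polynomial.X : Polynomial ℚ) ^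
            (aiL u + aiL v + (if u = [] then 0 else Multiset.card (s' - c))) else 0) := by
  unfold F
  rw [sum_perms_cons M s' hM, Finset.sum_sigma]
  refine Finset.sum_congr rfl fun c hc => ?_
  rw [Multiset.mem_toFinset, Multiset.mem_powerset] at hc
  rw [Finset.sum_product, Finset.mul_sum]
  refine Finset.sum_congr rfl fun u hu => ?_
  rw [Finset.mul_sum]
  refine Finset.sum_congr rfl fun v hv => ?_
  rw [mem_permsM] at hu hv
  have hult : ∀ a ∈ u, a < M := fun a ha =>
    hlt a (Multiset.mem_of_le hc (by rw [← hu]; exact ha))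
  have hvlt : ∀ a ∈ v, a < M := fun a ha =>
    hlt a (Multiset.mem_of_le (tsub_le_self) (by rw [← hv]; exact ha))
  show (if desL (u ++ M :: v) = k then (Polynomial.X : Polynomial ℚ) ^ aiL (u ++ M :: v) else 0)
    = _
  rw [desL_append_max u v M hult hvlt, aiL_append_max u v M hult hvlt,
    crossL_eq, hu, hv]
  have hvlen : v.length = Multiset.card (s' - c) := by rw [← hv]; simp
  rw [hvlen, mul_ite, mul_zero, ← pow_add]
  have harr : aiL u + aiL v + crossM c (s' - c) + (if u = [] then 0 else Multiset.card (s' - c))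
      = crossM c (s' - c) + (aiL u + aiL v + (if u = [] then 0 else Multiset.card (s' - c))) := by
    ring
  rw [harr]

lemma sum_perms_by_des (c : Multiset ℕ) (hc : c ≠ 0) (G : ℕ → List ℕ → Polynomial ℚ) :
    ∑ u ∈ permsM c, G (desL u) u
      = ∑ a ∈ Finset.range (Multiset.card c),
          ∑ u ∈ (permsM c).filter (fun u => desL u = a), G a u := by
  have maps : ∀ u ∈ permsM c, desL u ∈ Finset.range (Multiset.card c) := by
    intro u hu
    rw [mem_permsM] at hu
    have h1 := desL_le u
    have hlen : u.length = Multiset.card c := by rw [← hu]; simp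
    have h2 : 0 < Multiset.card c := Multiset.card_pos.2 hc
    exact Finset.mem_range.2 (by omega)
  rw [← Finset.sum_fiberwise_of_maps_to maps (fun u => G (desL u) u)]
  refine Finset.sum_congr rfl fun a _ => Finset.sum_congr rfl fun u hu => ?_
  rw [(Finset.mem_filter.1 hu).2]

lemma F_filter (c : Multiset ℕ) (a : ℕ) :
    F c a = ∑ u ∈ (permsM c).filter (fun u => desL u = a),
      (Polynomial.X : Polynomial ℚ) ^ aiL u := by
  rw [F, Finset.sum_filter]

lemma double_fiber (c d : Multiset ℕ) (hc : c ≠ 0) (hd : d ≠ 0) (k e : ℕ) :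
    (∑ u ∈ permsM c, ∑ v ∈ permsM d,
      (if desL u + desL v + 1 = k
        then (Polynomial.X : Polynomial ℚ) ^ (aiL u + aiL v + e) else 0))
    = ∑ a ∈ Finset.range (Multiset.card c), ∑ b ∈ Finset.range (Multiset.card d),
        (if a + b + 1 = k then F c a * F d b * Polynomial.X ^ e else 0) := by
  rw [sum_perms_by_des c hc (fun a u => ∑ v ∈ permsM d,
    (if a + desL v + 1 = k then (Polynomial.X : Polynomial ℚ) ^ (aiL u + aiL v + e) else 0))]
  refine Finset.sum_congr rfl fun a _ => ?_
  have step2 : ∀ u : List ℕ, (∑ v ∈ permsM d,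
      (if a + desL v + 1 = k then (Polynomial.X : Polynomial ℚ) ^ (aiL u + aiL v + e) else 0))
      = ∑ b ∈ Finset.range (Multiset.card d), ∑ v ∈ (permsM d).filter (fun v => desL v = b),
          (if a + b + 1 = k then (Polynomial.X : Polynomial ℚ) ^ (aiL u + aiL v + e) else 0) :=
    fun u => sum_perms_by_des d hd (fun b v =>
      (if a + b + 1 = k then (Polynomial.X : Polynomial ℚ) ^ (aiL u + aiL v + e) else 0))
  rw [Finset.sum_congr rfl (fun u _ => step2 u), Finset.sum_comm]
  refine Finset.sum_congr rfl fun b _ => ?_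
  rw [F_filter, F_filter]
  by_cases hcond : a + b + 1 = k
  · simp only [hcond, if_true, if_pos]
    rw [Finset.sum_mul_sum, Finset.sum_mul]
    refine Finset.sum_congr rfl fun u _ => ?_
    rw [Finset.sum_mul]
    refine Finset.sum_congr rfl fun v _ => ?_
    rw [pow_add, pow_add]
  · simp only [hcond, if_false]
    simp

lemma reflect_inner (c d : Multiset ℕ) (e k l : ℕ)
    (hsymc : ∀ a a', a + a' + 1 = Multiset.card c → F c a = F c a')
    (hsymd : ∀ b b', b + b' + 1 = Multiset.card d → F d b = F d b')
    (hkl : k + l = Multiset.card c + Multiset.card d) :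
    (∑ a ∈ Finset.range (Multiset.card c), ∑ b ∈ Finset.range (Multiset.card d),
      (if a + b + 1 = k then F c a * F d b * (Polynomial.X : Polynomial ℚ) ^ e else 0))
    = ∑ a ∈ Finset.range (Multiset.card c), ∑ b ∈ Finset.range (Multiset.card d),
      (if a + b + 1 = l then F c a * F d b * (Polynomial.X : Polynomial ℚ) ^ e else 0) := by
  conv_lhs => rw [← Finset.sum_range_reflect]
  refine Finset.sum_congr rfl fun a ha => ?_
  rw [← Finset.sum_range_reflect]
  refine Finset.sum_congr rfl fun b hb => ?_
  have ha' := Finset.mem_range.1 ha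
  have hb' := Finset.mem_range.1 hb
  rw [hsymc (Multiset.card c - 1 - a) a (by omega), hsymd (Multiset.card d - 1 - b) b (by omega)]
  exact if_congr (by omega) rfl rfl

lemma F_symm_aux : ∀ n : ℕ, ∀ s : Multiset ℕ, Multiset.card s = n → s.Nodup →
    ∀ k l : ℕ, k + l + 1 = n → F s k = F s l := by
  intro n
  induction n using Nat.strong_induction_on with
  | _ n ih =>
    intro s hcard hnd k l hkl
    rcases Nat.eq_or_lt_of_le (Nat.one_le_iff_ne_zero.2 (by omega : n ≠ 0)) with h1 | h1
    · have hk0 : k = 0 := by omega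
      have hl0 : l = 0 := by omega
      rw [hk0, hl0]
    have hs0 : s ≠ 0 := by
      intro h; rw [h] at hcard; simp at hcard; omega
    have hne : s.toFinset.Nonempty := by
      rw [Multiset.toFinset_nonempty]; exact hs0
    set M := s.toFinset.max' hne with hMdef
    have hMmem : M ∈ s := Multiset.mem_toFinset.1 (s.toFinset.max'_mem hne)
    have hMle : ∀ a ∈ s, a ≤ M := fun a ha => s.toFinset.le_max' a (Multiset.mem_toFinset.2 ha)
    set s' := s.erase M with hs'def
    have hserase : M ::ₘ s' = s := Multiset.cons_erase hMmem
    have hnd' : M ∉ s' ∧ s'.Nodup := by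
      rw [← hserase] at hnd
      exact Multiset.nodup_cons.1 hnd
    have hlt : ∀ a ∈ s', a < M := by
      intro a ha
      exact lt_of_le_of_ne (hMle a (Multiset.mem_of_mem_erase ha)) (fun h => hnd'.1 (h ▸ ha))
    have hcard' : Multiset.card s' = n - 1 := by
      rw [hs'def, Multiset.card_erase_of_mem hMmem, hcard]; rfl
    set m : ℕ := n - 1 with hmdef
    have hm1 : 1 ≤ m := by omega
    have hs'0 : s' ≠ 0 := by
      intro h; rw [h] at hcard'; simp at hcard'; omega
    have hklm : k + l = m := by omega
    have ihs' : ∀ a b : ℕ, a + b + 1 = m → F s' a = F s' b := by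
      intro a b hab
      exact ih m (by omega) s' (by omega) hnd'.2 a b hab
    rw [← hserase, F_cons M s' hnd'.1 hlt k, F_cons M s' hnd'.1 hlt l]
    set P := s'.powerset.toFinset with hPdef
    have h0P : (0 : Multiset ℕ) ∈ P := by
      rw [hPdef, Multiset.mem_toFinset, Multiset.mem_powerset]
      exact Multiset.zero_le _
    have hs'P : s' ∈ P.erase 0 := by
      rw [Finset.mem_erase, hPdef, Multiset.mem_toFinset, Multiset.mem_powerset]
      exact ⟨hs'0, le_refl _⟩
    set T : ℕ → Multiset ℕ → Polynomial ℚ := fun j c =>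
      (Polynomial.X : Polynomial ℚ) ^ (crossM c (s' - c)) *
        ∑ u ∈ permsM c, ∑ v ∈ permsM (s' - c),
          (if desL u + desL v + (if v = [] then 0 else 1) = j
          then (Polynomial.X : Polynomial ℚ) ^
            (aiL u + aiL v + (if u = [] then 0 else Multiset.card (s' - c))) else 0)
      with hTdef
    show ∑ c ∈ P, T k c = ∑ c ∈ P, T l c
    rw [← Finset.sum_erase_add P _ h0P, ← Finset.sum_erase_add (P.erase 0) _ hs'P,
      ← Finset.sum_erase_add P (T l) h0P, ← Finset.sum_erase_add (P.erase 0) (T l) hs'P]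
    -- boundary evaluations
    have hT0 : ∀ j : ℕ, T j 0 = ∑ b ∈ Finset.range m, (if b + 1 = j then F s' b else 0) := by
      intro j
      simp only [hTdef]
      have hcross0 : crossM 0 (s' - 0) = 0 := by simp [crossM]
      rw [hcross0, pow_zero, one_mul]
      simp only [Multiset.sub_zero, permsM_zero, Finset.sum_singleton, desL_nil, aiL_nil,
        zero_add, eq_self_iff_true, if_true, add_zero]
      have hstep : (∑ v ∈ permsM s',
          (if desL v + (if v = [] then 0 else 1) = j
            then (Polynomial.X : Polynomial ℚ) ^ aiL v else 0))
          = ∑ v ∈ permsM s', (if desL v + 1 = j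
            then (Polynomial.X : Polynomial ℚ) ^ aiL v else 0) := by
        refine Finset.sum_congr rfl fun v hv => ?_
        rw [mem_permsM] at hv
        have : v ≠ [] := by
          intro h; rw [h] at hv; exact hs'0 hv.symm
        rw [if_neg this]
      rw [hstep, sum_perms_by_des s' hs'0 (fun b v =>
        (if b + 1 = j then (Polynomial.X : Polynomial ℚ) ^ aiL v else 0))]
      refine Finset.sum_congr (by rw [hcard']) fun b _ => ?_
      by_cases hbj : b + 1 = j
      · rw [if_pos hbj, F_filter]
        exact Finset.sum_congr rfl fun v _ => if_pos hbj
      · rw [if_neg hbj]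
        exact Finset.sum_eq_zero fun v _ => if_neg hbj
    have hTs' : ∀ j : ℕ, T j s' = F s' j := by
      intro j
      simp only [hTdef]
      have hcross0 : crossM s' (s' - s') = 0 := by simp [crossM]
      rw [hcross0, pow_zero, one_mul]
      simp only [tsub_self, permsM_zero, Multiset.card_zero]
      rw [F]
      refine Finset.sum_congr rfl fun u hu => ?_
      rw [Finset.sum_singleton, desL_nil, aiL_nil]
      simp
    -- middle terms
    have hmid : ∀ c ∈ (P.erase 0).erase s', T k c = T l c := by
      intro c hc
      rw [Finset.mem_erase, Finset.mem_erase, hPdef, Multiset.mem_toFinset,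
        Multiset.mem_powerset] at hc
      obtain ⟨hcs', hc0, hcle⟩ := hc
      have hd0 : s' - c ≠ 0 := by
        intro h
        exact hcs' (le_antisymm hcle (tsub_eq_zero_iff_le.1 h))
      have hcnd : c.Nodup := Multiset.nodup_of_le hcle hnd'.2
      have hdnd : (s' - c).Nodup := Multiset.nodup_of_le (tsub_le_self) hnd'.2
      have hcards : Multiset.card c + Multiset.card (s' - c) = m := by
        have h2 := Multiset.card_le_card hcle
        rw [Multiset.card_sub hcle]
        omega
      have hc1 : 1 ≤ Multiset.card c := Multiset.card_pos.2 hc0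
      have hd1 : 1 ≤ Multiset.card (s' - c) := Multiset.card_pos.2 hd0
      simp only [hTdef]
      congr 1
      have hclean : ∀ j : ℕ, (∑ u ∈ permsM c, ∑ v ∈ permsM (s' - c),
          (if desL u + desL v + (if v = [] then 0 else 1) = j
          then (Polynomial.X : Polynomial ℚ) ^
            (aiL u + aiL v + (if u = [] then 0 else Multiset.card (s' - c))) else 0))
          = ∑ u ∈ permsM c, ∑ v ∈ permsM (s' - c),
          (if desL u + desL v + 1 = j
          then (Polynomial.X : Polynomial ℚ) ^
            (aiL u + aiL v + Multiset.card (s' - c)) else 0) := by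
        intro j
        refine Finset.sum_congr rfl fun u hu => Finset.sum_congr rfl fun v hv => ?_
        rw [mem_permsM] at hu hv
        have hvne : v ≠ [] := by
          intro h; rw [h] at hv; exact hd0 hv.symm
        have hune : u ≠ [] := by
          intro h; rw [h] at hu; exact hc0 hu.symm
        rw [if_neg hvne, if_neg hune]
      rw [hclean k, hclean l,
        double_fiber c (s' - c) hc0 hd0 k (Multiset.card (s' - c)),
        double_fiber c (s' - c) hc0 hd0 l (Multiset.card (s' - c))]
      refine reflect_inner c (s' - c) _ k l ?_ ?_ (by omega)
      · intro a a' ha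
        exact ih (Multiset.card c) (by omega) c rfl hcnd a a' ha
      · intro b b' hb
        exact ih (Multiset.card (s' - c)) (by omega) (s' - c) rfl hdnd b b' hb
    -- boundary pair identity
    have hbval : ∀ j : ℕ, (∑ b ∈ Finset.range m, (if b + 1 = j then F s' b else 0))
        = if 1 ≤ j ∧ j ≤ m then F s' (j - 1) else 0 := by
      intro j
      cases j with
      | zero =>
        rw [if_neg (by omega)]
        exact Finset.sum_eq_zero fun b _ => if_neg (by omega)
      | succ j' =>
        have h2 : (∑ b ∈ Finset.range m, (if b + 1 = j' + 1 then F s' b else 0))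
            = ∑ b ∈ Finset.range m, (if b = j' then F s' b else 0) :=
          Finset.sum_congr rfl fun b _ => if_congr (by omega) rfl rfl
        rw [h2, Finset.sum_ite_eq' (Finset.range m) j' (F s')]
        by_cases hj : j' < m
        · rw [if_pos (Finset.mem_range.2 hj), if_pos (by omega)]
          congr 1
        · rw [if_neg (by simp [hj]), if_neg (by omega)]
    have hbound : T k s' + T k 0 = T l s' + T l 0 := by
      rw [hT0, hT0, hTs', hTs', hbval, hbval]
      rcases Nat.eq_zero_or_pos k with hk0 | hk0
      · subst hk0
        have hlm : l = m := by omega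
        subst hlm
        rw [if_neg (by omega), if_pos (by omega)]
        rw [F_eq_zero s' m hs'0 (by omega), zero_add, add_zero]
        exact ihs' 0 (m - 1) (by omega)
      rcases Nat.eq_zero_or_pos l with hl0 | hl0
      · subst hl0
        have hkm : k = m := by omega
        subst hkm
        rw [if_pos (by omega), if_neg (by omega)]
        rw [F_eq_zero s' m hs'0 (by omega), zero_add, add_zero]
        exact (ihs' 0 (m - 1) (by omega)).symm
      · rw [if_pos (by omega), if_pos (by omega)]
        rw [ihs' k (l - 1) (by omega), ihs' (k - 1) l (by omega)]
        ring
    rw [Finset.sum_congr rfl hmid, add_assoc, add_assoc, hbound]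


def mword (n : ℕ) : Multiset ℕ := Multiset.map (fun i : Fin n => (i : ℕ) + 1) Finset.univ.val

lemma word_coe {n : ℕ} (π : Equiv.Perm (Fin n)) : (↑(word π) : Multiset ℕ) = mword n := by
  rw [word, List.ofFn_eq_map, ← Multiset.map_coe, mword]
  have h1 : (↑(List.finRange n) : Multiset (Fin n)) = Finset.univ.val := by
    rw [Fin.univ_def]
  rw [h1]
  have h2 : (fun i : Fin n => (π i : ℕ) + 1) = (fun i : Fin n => (i : ℕ) + 1) ∘ π := rfl
  rw [h2, ← Multiset.map_map]
  congr 1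
  have h3 := Finset.map_univ_equiv π
  have h4 := congrArg Finset.val h3
  rw [Finset.map_val] at h4
  exact h4

lemma mword_card (n : ℕ) : Multiset.card (mword n) = n := by simp [mword]

lemma mword_nodup (n : ℕ) : (mword n).Nodup := by
  refine Multiset.Nodup.map (fun a b h => ?_) Finset.univ.nodup
  have : (a : ℕ) = b := by omega
  exact Fin.ext this

lemma mem_mword {n a : ℕ} : a ∈ mword n ↔ 1 ≤ a ∧ a ≤ n := by
  simp only [mword, Multiset.mem_map]
  constructor
  · rintro ⟨i, -, rfl⟩
    have := i.isLt
    omega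
  · rintro ⟨h1, h2⟩
    exact ⟨⟨a - 1, by omega⟩, Finset.mem_univ_val _, by simp; omega⟩

lemma sum_word {n : ℕ} (f : List ℕ → Polynomial ℚ) :
    ∑ π : Equiv.Perm (Fin n), f (word π) = ∑ w ∈ permsM (mword n), f w := by
  refine Finset.sum_bij (fun π _ => word π) ?_ ?_ ?_ (fun a ha => rfl)
  · intro π _
    exact mem_permsM.2 (word_coe π)
  · intro π1 _ π2 _ h
    unfold word at h
    rw [List.ofFn_inj] at h
    ext i
    have := congrFun h i
    have h' : ((π1 i : ℕ) + 1 = (π2 i : ℕ) + 1) := by exact_mod_cast this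
    omega
  · intro w hw
    rw [mem_permsM] at hw
    have hlen : w.length = n := by
      have := congrArg Multiset.card hw
      simpa [mword_card] using this
    have hnodup : w.Nodup := by
      rw [← Multiset.coe_nodup, hw]
      exact mword_nodup n
    have hmem : ∀ i : ℕ, i < n → 1 ≤ w.getD i 0 ∧ w.getD i 0 ≤ n := by
      intro i hi
      have h2 : w.getD i 0 ∈ w := getD_mem w i (by omega)
      have h3 : w.getD i 0 ∈ mword n := by rw [← hw]; exact h2
      exact mem_mword.1 h3
    have hinj : Function.Injective (fun i : Fin n => (⟨w.getD i 0 - 1, by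
        have := hmem i i.isLt; omega⟩ : Fin n)) := by
      intro i1 i2 h
      have h1 := hmem i1 i1.isLt
      have h2 := hmem i2 i2.isLt
      have h3' : w.getD i1 0 - 1 = w.getD i2 0 - 1 := congrArg Fin.val h
      have h3 : w.getD i1 0 = w.getD i2 0 := by omega
      rw [List.getD_eq_getElem w 0 (by omega : (i1:ℕ) < w.length),
        List.getD_eq_getElem w 0 (by omega : (i2:ℕ) < w.length)] at h3
      have hget := List.nodup_iff_injective_get.1 hnodup
      have := hget (by simpa using h3 : w.get ⟨i1, by omega⟩ = w.get ⟨i2, by omega⟩)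
      simpa [Fin.ext_iff] using this
    set g := Equiv.ofBijective _ (Finite.injective_iff_bijective.1 hinj)
    refine ⟨g, Finset.mem_univ _, ?_⟩
    unfold word
    refine List.ext_getElem (by simp [hlen]) fun i h1 h2 => ?_
    rw [List.getElem_ofFn]
    show (g ⟨i, _⟩ : ℕ) + 1 = w[i]
    have hgi : (g ⟨i, by simpa using h1⟩ : ℕ) = w.getD i 0 - 1 := rfl
    rw [hgi]
    have h4 := hmem i (by simpa using h1)
    rw [List.getD_eq_getElem w 0 (by omega)] at h4 ⊢
    omega

lemma getD_append_max_iff (u v : List ℕ) (M : ℕ) (hM0 : 0 < M)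
    (hu : ∀ a ∈ u, a < M) (hv : ∀ a ∈ v, a < M) (p : ℕ) :
    (u ++ M :: v).getD p 0 = M ↔ u.length = p := by
  rcases lt_trichotomy p u.length with h | h | h
  · rw [List.getD_append _ _ _ _ h]
    have := hu _ (getD_mem u p h)
    constructor
    · intro h2; omega
    · intro h2; omega
  · subst h
    rw [List.getD_append_right _ _ _ _ (le_refl _)]
    simp
  · constructor
    · intro h2
      exfalso
      by_cases hlen : p < (u ++ M :: v).length
      · rw [List.getD_append_right _ _ _ _ (by omega)] at h2
        have h3 : p - u.length = (p - u.length - 1) + 1 := by omega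
        rw [h3] at h2
        have h4 : (M :: v).getD ((p - u.length - 1) + 1) 0 = v.getD (p - u.length - 1) 0 := rfl
        rw [h4] at h2
        simp at hlen
        have h5 := hv _ (getD_mem v (p - u.length - 1) (by omega))
        omega
      · rw [List.getD_eq_default _ _ (by omega)] at h2
        omega
    · intro h2; omega

lemma sum_perms_pos (M : ℕ) (s' : Multiset ℕ) (hM : M ∉ s') (hlt : ∀ a ∈ s', a < M)
    (hM0 : 0 < M) (p k : ℕ) :
    (∑ w ∈ permsM (M ::ₘ s'),
      (if w.getD p 0 = M ∧ desL w = k then (Polynomial.X : Polynomial ℚ) ^ aiL w else 0))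
    = ∑ c ∈ s'.powerset.toFinset,
      (if Multiset.card c = p then
        (Polynomial.X : Polynomial ℚ) ^ (crossM c (s' - c)) *
        ∑ u ∈ permsM c, ∑ v ∈ permsM (s' - c),
          (if desL u + desL v + (if v = [] then 0 else 1) = k
          then (Polynomial.X : Polynomial ℚ) ^
            (aiL u + aiL v + (if u = [] then 0 else Multiset.card (s' - c))) else 0) else 0) := by
  rw [sum_perms_cons M s' hM, Finset.sum_sigma]
  refine Finset.sum_congr rfl fun c hc => ?_
  rw [Multiset.mem_toFinset, Multiset.mem_powerset] at hc
  rw [Finset.sum_product]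
  by_cases hcp : Multiset.card c = p
  · rw [if_pos hcp, Finset.mul_sum]
    refine Finset.sum_congr rfl fun u hu => ?_
    rw [Finset.mul_sum]
    refine Finset.sum_congr rfl fun v hv => ?_
    rw [mem_permsM] at hu hv
    have hult : ∀ a ∈ u, a < M := fun a ha =>
      hlt a (Multiset.mem_of_le hc (by rw [← hu]; exact ha))
    have hvlt : ∀ a ∈ v, a < M := fun a ha =>
      hlt a (Multiset.mem_of_le (tsub_le_self) (by rw [← hv]; exact ha))
    have hulen : u.length = p := by
      rw [← hcp, ← hu]; simp
    have hiff : ((u ++ M :: v).getD p 0 = M ∧ desL (u ++ M :: v) = k)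
        ↔ (desL (u ++ M :: v) = k) :=
      and_iff_right ((getD_append_max_iff u v M hM0 hult hvlt p).2 hulen)
    show (if (u ++ M :: v).getD p 0 = M ∧ desL (u ++ M :: v) = k
        then (Polynomial.X : Polynomial ℚ) ^ aiL (u ++ M :: v) else 0) = _
    rw [if_congr hiff rfl rfl, desL_append_max u v M hult hvlt,
      aiL_append_max u v M hult hvlt, crossL_eq, hu, hv]
    have hvlen : v.length = Multiset.card (s' - c) := by rw [← hv]; simp
    rw [hvlen, mul_ite, mul_zero, ← pow_add]
    have harr : aiL u + aiL v + crossM c (s' - c)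
        + (if u = [] then 0 else Multiset.card (s' - c))
        = crossM c (s' - c) + (aiL u + aiL v
          + (if u = [] then 0 else Multiset.card (s' - c))) := by
      ring
    rw [harr]
  · rw [if_neg hcp]
    refine Finset.sum_eq_zero fun u hu => Finset.sum_eq_zero fun v hv => ?_
    rw [mem_permsM] at hu hv
    have hult : ∀ a ∈ u, a < M := fun a ha =>
      hlt a (Multiset.mem_of_le hc (by rw [← hu]; exact ha))
    have hvlt : ∀ a ∈ v, a < M := fun a ha =>
      hlt a (Multiset.mem_of_le (tsub_le_self) (by rw [← hv]; exact ha))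
    have hulen : u.length ≠ p := by
      rw [← hu] at hcp
      simpa using hcp
    show (if (u ++ M :: v).getD p 0 = M ∧ desL (u ++ M :: v) = k
        then (Polynomial.X : Polynomial ℚ) ^ aiL (u ++ M :: v) else 0) = 0
    rw [if_neg]
    rintro ⟨h1, -⟩
    exact hulen ((getD_append_max_iff u v M hM0 hult hvlt p).1 h1)



/-- Symmetry of the restricted statistics: for `1 < j < n`, the `ai`-generating function of
permutations with `π(j) = n` and `des = k` equals that with `des = n - 1 - k`. -/
theorem restricted_qEulerian_symmetric (n j k : ℕ) (h1 : 1 < j) (h2 : j < n) :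
    ∑ π ∈ Finset.univ.filter
        (fun π : Equiv.Perm (Fin n) => (word π).getD (j-1) 0 = n ∧ des π = k),
      (Polynomial.X : Polynomial ℚ) ^ ai π =
    ∑ π ∈ Finset.univ.filter
        (fun π : Equiv.Perm (Fin n) => (word π).getD (j-1) 0 = n ∧ des π = n - 1 - k),
      (Polynomial.X : Polynomial ℚ) ^ ai π := by
  have hn3 : 3 ≤ n := by omega
  set s' : Multiset ℕ := (mword n).erase n with hs'def
  have hnmem : n ∈ mword n := mem_mword.2 ⟨by omega, le_refl n⟩
  have hcons : n ::ₘ s' = mword n := Multiset.cons_erase hnmem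
  have hnd' : n ∉ s' ∧ s'.Nodup := by
    have := mword_nodup n
    rw [← hcons] at this
    exact Multiset.nodup_cons.1 this
  have hlt : ∀ a ∈ s', a < n := by
    intro a ha
    have h3 : a ∈ mword n := Multiset.mem_of_mem_erase ha
    have h4 := (mem_mword.1 h3).2
    exact lt_of_le_of_ne h4 (fun h => hnd'.1 (h ▸ ha))
  have hcards' : Multiset.card s' = n - 1 := by
    rw [hs'def, Multiset.card_erase_of_mem hnmem, mword_card]
    rfl
  have step : ∀ K : ℕ,
      (∑ π ∈ Finset.univ.filter
        (fun π : Equiv.Perm (Fin n) => (word π).getD (j-1) 0 = n ∧ des π = K),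
        (Polynomial.X : Polynomial ℚ) ^ ai π)
      = ∑ c ∈ s'.powerset.toFinset,
        (if Multiset.card c = j - 1 then
          (Polynomial.X : Polynomial ℚ) ^ (crossM c (s' - c)) *
          ∑ u ∈ permsM c, ∑ v ∈ permsM (s' - c),
            (if desL u + desL v + (if v = [] then 0 else 1) = K
            then (Polynomial.X : Polynomial ℚ) ^
              (aiL u + aiL v + (if u = [] then 0 else Multiset.card (s' - c))) else 0) else 0) := by
    intro K
    rw [Finset.sum_filter]
    have hpt : ∀ π : Equiv.Perm (Fin n),
        (if (word π).getD (j-1) 0 = n ∧ des π = K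
          then (Polynomial.X : Polynomial ℚ) ^ ai π else 0)
        = (fun w : List ℕ => if w.getD (j-1) 0 = n ∧ desL w = K
          then (Polynomial.X : Polynomial ℚ) ^ aiL w else 0) (word π) := fun π => rfl
    rw [Finset.sum_congr rfl fun π _ => hpt π]
    rw [sum_word (fun w : List ℕ => if w.getD (j-1) 0 = n ∧ desL w = K
      then (Polynomial.X : Polynomial ℚ) ^ aiL w else 0)]
    rw [← hcons, sum_perms_pos n s' hnd'.1 hlt (by omega) (j-1) K]
  rw [step k, step (n - 1 - k)]
  refine Finset.sum_congr rfl fun c hc => ?_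
  rw [Multiset.mem_toFinset, Multiset.mem_powerset] at hc
  by_cases hcp : Multiset.card c = j - 1
  · rw [if_pos hcp, if_pos hcp]
    congr 1
    have hc0 : c ≠ 0 := by
      intro h
      rw [h] at hcp
      simp at hcp
      omega
    have hcardd : Multiset.card (s' - c) = n - j := by
      rw [Multiset.card_sub hc, hcards', hcp]
      omega
    have hd0 : (s' - c) ≠ 0 := by
      intro h
      rw [h] at hcardd
      simp at hcardd
      omega
    have hcnd : c.Nodup := Multiset.nodup_of_le hc hnd'.2
    have hdnd : (s' - c).Nodup := Multiset.nodup_of_le tsub_le_self hnd'.2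
    have hclean : ∀ K : ℕ, (∑ u ∈ permsM c, ∑ v ∈ permsM (s' - c),
        (if desL u + desL v + (if v = [] then 0 else 1) = K
        then (Polynomial.X : Polynomial ℚ) ^
          (aiL u + aiL v + (if u = [] then 0 else Multiset.card (s' - c))) else 0))
        = ∑ u ∈ permsM c, ∑ v ∈ permsM (s' - c),
        (if desL u + desL v + 1 = K
        then (Polynomial.X : Polynomial ℚ) ^
          (aiL u + aiL v + Multiset.card (s' - c)) else 0) := by
      intro K
      refine Finset.sum_congr rfl fun u hu => Finset.sum_congr rfl fun v hv => ?_
      rw [mem_permsM] at hu hv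
      have hvne : v ≠ [] := by
        intro h; rw [h] at hv; exact hd0 hv.symm
      have hune : u ≠ [] := by
        intro h; rw [h] at hu; exact hc0 hu.symm
      rw [if_neg hvne, if_neg hune]
    rw [hclean k, hclean (n - 1 - k),
      double_fiber c (s' - c) hc0 hd0 k (Multiset.card (s' - c)),
      double_fiber c (s' - c) hc0 hd0 (n - 1 - k) (Multiset.card (s' - c))]
    have hcc := Multiset.card_pos.2 hc0
    have hdd := Multiset.card_pos.2 hd0
    have hcd : Multiset.card c + Multiset.card (s' - c) = n - 1 := by
      rw [hcardd, hcp]; omega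
    by_cases hk : k ≤ n - 1
    · refine reflect_inner c (s' - c) _ k (n - 1 - k) ?_ ?_ (by omega)
      · exact fun a a' ha => F_symm_aux (Multiset.card c) c rfl hcnd a a' ha
      · exact fun b b' hb => F_symm_aux (Multiset.card (s' - c)) (s' - c) rfl hdnd b b' hb
    · have hz1 : (∑ a ∈ Finset.range (Multiset.card c),
          ∑ b ∈ Finset.range (Multiset.card (s' - c)),
          (if a + b + 1 = k then F c a * F (s' - c) b
            * (Polynomial.X : Polynomial ℚ) ^ (Multiset.card (s' - c)) else 0)) = 0 := by
        refine Finset.sum_eq_zero fun a ha => Finset.sum_eq_zero fun b hb => ?_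
        have ha' := Finset.mem_range.1 ha
        have hb' := Finset.mem_range.1 hb
        exact if_neg (by omega)
      have hz2 : (∑ a ∈ Finset.range (Multiset.card c),
          ∑ b ∈ Finset.range (Multiset.card (s' - c)),
          (if a + b + 1 = n - 1 - k then F c a * F (s' - c) b
            * (Polynomial.X : Polynomial ℚ) ^ (Multiset.card (s' - c)) else 0)) = 0 := by
        refine Finset.sum_eq_zero fun a ha => Finset.sum_eq_zero fun b hb => ?_
        exact if_neg (by omega)
      rw [hz1, hz2]
  · rw [if_neg hcp, if_neg hcp]


end QEuler
end

section
/- For q = 1 and 1 < j < n, the restricted Eulerian numbers are symmetric: the number of permutations π of [n] with π(j) = n and exactly k descents equals the number with π(j) = n and exactly n−1−k descents. -/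
namespace QEuler

lemma desL_eq (w : List ℕ) : desL w =
    ((Finset.range (w.length - 1)).filter (fun i => w.getD (i+1) 0 < w.getD i 0)).card := by
  rfl

lemma word_length {n : ℕ} (π : Equiv.Perm (Fin n)) : (word π).length = n := by simp [word]

lemma word_getD {n : ℕ} (π : Equiv.Perm (Fin n)) (i : ℕ) (hi : i < n) :
    (word π).getD i 0 = (π ⟨i, hi⟩ : ℕ) + 1 := by
  rw [List.getD_eq_getElem _ _ (by rw [word_length]; exact hi)]
  simp [word]

private def gfun (n : ℕ) (x : Fin n) : Fin n :=
  if (x:ℕ) = n-1 then x else ⟨n-2-(x:ℕ), by have := x.isLt; omega⟩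

private lemma gfun_val {n : ℕ} (x : Fin n) :
    ((gfun n x : Fin n) : ℕ) = if (x:ℕ) = n-1 then (x:ℕ) else n-2-(x:ℕ) := by
  unfold gfun; split <;> rfl

private lemma gfun_invol (n : ℕ) : Function.Involutive (gfun n) := by
  intro x
  have hx := x.isLt
  unfold gfun
  by_cases h : (x:ℕ) = n-1
  · simp [h]
  · rw [if_neg h]
    have h2 : ¬ ((n-2-(x:ℕ)) = n-1) := by omega
    rw [if_neg h2]
    ext; simp; omega

private def gperm (n : ℕ) : Equiv.Perm (Fin n) :=
  Function.Involutive.toPerm (gfun n) (gfun_invol n)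

private lemma gperm_apply {n : ℕ} (x : Fin n) : gperm n x = gfun n x := rfl

def Fset {n : ℕ} (π : Equiv.Perm (Fin n)) : Finset ℕ :=
  (Finset.range (n-1)).filter (fun i => (word π).getD (i+1) 0 < (word π).getD i 0)

lemma des_eq_Fset {n : ℕ} (π : Equiv.Perm (Fin n)) : des π = (Fset π).card := by
  rw [des, desL_eq, word_length]; rfl

lemma memF {n : ℕ} (π : Equiv.Perm (Fin n)) (i : ℕ) :
    i ∈ Fset π ↔ ∃ hi : i < n-1, (π ⟨i+1, by omega⟩:ℕ) < (π ⟨i, by omega⟩:ℕ) := by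
  simp only [Fset, Finset.mem_filter, Finset.mem_range]
  constructor
  · rintro ⟨hi, hP⟩
    refine ⟨hi, ?_⟩
    rw [word_getD π (i+1) (by omega), word_getD π i (by omega)] at hP
    omega
  · rintro ⟨hi, hP⟩
    refine ⟨hi, ?_⟩
    rw [word_getD π (i+1) (by omega), word_getD π i (by omega)]
    omega

lemma memF' {n : ℕ} (π : Equiv.Perm (Fin n)) (i : ℕ) :
    i ∈ Fset (π.trans (gperm n)) ↔ ∃ hi : i < n-1,
      ((gfun n (π ⟨i+1, by omega⟩) : Fin n):ℕ) < ((gfun n (π ⟨i, by omega⟩) : Fin n):ℕ) := by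
  rw [memF]
  constructor
  · rintro ⟨hi, hP⟩
    exact ⟨hi, hP⟩
  · rintro ⟨hi, hP⟩
    exact ⟨hi, hP⟩

private lemma gfun_lt_flip {n : ℕ} {a b : Fin n} (ha : (a:ℕ) ≠ n-1) (hb : (b:ℕ) ≠ n-1)
    (hab : (a:ℕ) ≠ (b:ℕ)) :
    (((gfun n b : Fin n):ℕ) < ((gfun n a : Fin n):ℕ)) ↔ ¬ ((b:ℕ) < (a:ℕ)) := by
  rw [gfun_val, gfun_val, if_neg ha, if_neg hb]
  have := a.isLt; have := b.isLt; omega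

private lemma gfun_lt_max {n : ℕ} {a b : Fin n} (ha : (a:ℕ) = n-1) (hb : (b:ℕ) ≠ n-1) :
    ((gfun n b : Fin n):ℕ) < ((gfun n a : Fin n):ℕ) := by
  rw [gfun_val, gfun_val, if_pos ha, if_neg hb]
  have := b.isLt; omega

private lemma gfun_max_not_lt {n : ℕ} {a b : Fin n} (ha : (a:ℕ) ≠ n-1) (hb : (b:ℕ) = n-1) :
    ¬ (((gfun n b : Fin n):ℕ) < ((gfun n a : Fin n):ℕ)) := by
  rw [gfun_val, gfun_val, if_pos hb, if_neg ha]
  have := a.isLt; omega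

lemma main_key {n j : ℕ} (h1 : 1 < j) (h2 : j < n) (π : Equiv.Perm (Fin n))
    (hmax : (π ⟨j-1, by omega⟩ : ℕ) = n - 1) :
    1 ≤ des π ∧ des π ≤ n - 2 ∧ des (π.trans (gperm n)) = n - 1 - des π := by
  have hn : 3 ≤ n := by omega
  have hidx : ∀ (a b : ℕ) (ha : a < n) (hb : b < n),
      (π ⟨a,ha⟩ : ℕ) = (π ⟨b,hb⟩ : ℕ) → a = b := by
    intro a b ha hb h
    have := π.injective (Fin.ext h)
    simpa using this
  have hvm : ∀ (i:ℕ) (hi : i < n), ((π ⟨i,hi⟩:ℕ) = n-1 ↔ i = j-1) := by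
    intro i hi
    constructor
    · intro h; exact hidx i (j-1) hi (by omega) (h.trans hmax.symm)
    · intro h; subst h; exact hmax
  have hlt : ∀ (i:ℕ) (hi : i < n), (π ⟨i,hi⟩:ℕ) < n := fun i hi => (π _).isLt
  have hj1F : j-1 ∈ Fset π := by
    rw [memF]
    refine ⟨by omega, ?_⟩
    have h2' : (π ⟨j-1+1, by omega⟩:ℕ) ≠ n-1 := fun hc => by
      have := (hvm _ (by omega)).mp hc; omega
    have := hlt (j-1+1) (by omega)
    have h1' : (π ⟨j-1, by omega⟩:ℕ) = n-1 := hmax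
    omega
  have hj2F : j-2 ∉ Fset π := by
    rw [memF]
    rintro ⟨hi, hP⟩
    have h1' : (π ⟨j-2+1, by omega⟩:ℕ) = n-1 := (hvm _ (by omega)).mpr (by omega)
    have := hlt (j-2) (by omega)
    have h2' : (π ⟨j-2, by omega⟩:ℕ) ≠ n-1 := fun hc => by
      have := (hvm _ (by omega)).mp hc; omega
    omega
  have hset : Fset (π.trans (gperm n)) =
      insert (j-1) ((Finset.range (n-1) \ Fset π).erase (j-2)) := by
    ext i
    rw [memF', Finset.mem_insert, Finset.mem_erase, Finset.mem_sdiff, Finset.mem_range, memF]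
    by_cases hi : i < n-1
    · by_cases hij1 : i = j-1
      · subst hij1
        simp only [true_or, iff_true]
        refine ⟨hi, ?_⟩
        exact gfun_lt_max hmax (fun hc => by
          have := (hvm _ (by omega)).mp hc; omega)
      · by_cases hij2 : i = j-2
        · subst hij2
          constructor
          · intro ⟨_, hP⟩
            exact absurd hP (gfun_max_not_lt
              (fun hc => by have := (hvm _ (by omega)).mp hc; omega)
              ((hvm _ (by omega)).mpr (by omega)))
          · rintro (h | ⟨h, _⟩) <;> omega
        · have ha : (π ⟨i, by omega⟩:ℕ) ≠ n-1 := fun hc => by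
            have := (hvm _ (by omega)).mp hc; omega
          have hb : (π ⟨i+1, by omega⟩:ℕ) ≠ n-1 := fun hc => by
            have := (hvm _ (by omega)).mp hc; omega
          have hne : (π ⟨i, by omega⟩:ℕ) ≠ (π ⟨i+1, by omega⟩:ℕ) := fun hc => by
            have := hidx i (i+1) (by omega) (by omega) hc; omega
          constructor
          · rintro ⟨_, hP⟩
            have hflip := (gfun_lt_flip ha hb hne).mp hP
            exact Or.inr ⟨hij2, hi, fun hQ => hflip hQ.2⟩
          · rintro (h | ⟨_, _, hQ⟩)
            · omega
            · exact ⟨hi, (gfun_lt_flip ha hb hne).mpr (fun hc => hQ ⟨hi, hc⟩)⟩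
    · constructor
      · rintro ⟨h, _⟩; omega
      · rintro (h | ⟨_, h, _⟩) <;> omega
  have hsub : Fset π ⊆ Finset.range (n-1) := Finset.filter_subset _ _
  have hcardF : (Fset π).card ≤ n-1 := by
    have := Finset.card_le_card hsub
    simpa using this
  have hsd : (Finset.range (n-1) \ Fset π).card = (n-1) - (Fset π).card := by
    rw [Finset.card_sdiff_of_subset hsub, Finset.card_range]
  have hj2sd : j-2 ∈ Finset.range (n-1) \ Fset π := by
    rw [Finset.mem_sdiff, Finset.mem_range]; exact ⟨by omega, hj2F⟩
  have hj1sd : j-1 ∉ (Finset.range (n-1) \ Fset π).erase (j-2) := by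
    intro h
    have := (Finset.mem_erase.mp h).2
    rw [Finset.mem_sdiff] at this
    exact this.2 hj1F
  have hge1 : 1 ≤ des π := by
    rw [des_eq_Fset]
    exact Finset.card_pos.mpr ⟨j-1, hj1F⟩
  have hle : des π ≤ n-2 := by
    rw [des_eq_Fset]
    have : 1 ≤ (Finset.range (n-1) \ Fset π).card := Finset.card_pos.mpr ⟨j-2, hj2sd⟩
    omega
  refine ⟨hge1, hle, ?_⟩
  have hcc : des π = (Fset π).card := des_eq_Fset π
  rw [des_eq_Fset (π.trans (gperm n)), hset, Finset.card_insert_of_notMem hj1sd,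
    Finset.card_erase_of_mem hj2sd, hsd]
  omega

lemma cond_iff {n j : ℕ} (h1 : 1 < j) (h2 : j < n) (π : Equiv.Perm (Fin n)) :
    (word π).getD (j-1) 0 = n ↔ (π ⟨j-1, by omega⟩ : ℕ) = n - 1 := by
  rw [word_getD π (j-1) (by omega)]
  omega

lemma cond_trans {n j : ℕ} (h1 : 1 < j) (h2 : j < n) (π : Equiv.Perm (Fin n))
    (hw : (word π).getD (j-1) 0 = n) :
    (word (π.trans (gperm n))).getD (j-1) 0 = n := by
  rw [cond_iff h1 h2] at hw ⊢
  show ((gfun n (π ⟨j-1, by omega⟩) : Fin n) : ℕ) = n - 1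
  rw [gfun_val, if_pos hw]
  exact hw


/-- Symmetry of the restricted Eulerian numbers: for `1 < j < n`,
`B_{n,k}^{(j)} = B_{n,n-1-k}^{(j)}`. -/
theorem restricted_eulerian_symmetric (n j k : ℕ) (h1 : 1 < j) (h2 : j < n) :
    (Finset.univ.filter
        (fun π : Equiv.Perm (Fin n) => (word π).getD (j-1) 0 = n ∧ des π = k)).card =
    (Finset.univ.filter
        (fun π : Equiv.Perm (Fin n) => (word π).getD (j-1) 0 = n ∧ des π = n - 1 - k)).card := by
  have hinv : ∀ π : Equiv.Perm (Fin n), (π.trans (gperm n)).trans (gperm n) = π := by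
    intro π
    ext x
    exact congrArg Fin.val (gfun_invol n (π x))
  apply Finset.card_bij' (fun π _ => π.trans (gperm n)) (fun π _ => π.trans (gperm n))
  · intro π hπ
    exact hinv π
  · intro π hπ
    exact hinv π
  · intro π hπ
    simp only [Finset.mem_filter, Finset.mem_univ, true_and] at hπ ⊢
    obtain ⟨hw, hd⟩ := hπ
    obtain ⟨hge, hle, hdes⟩ := main_key h1 h2 π ((cond_iff h1 h2 π).mp hw)
    exact ⟨cond_trans h1 h2 π hw, by omega⟩
  · intro π hπ
    simp only [Finset.mem_filter, Finset.mem_univ, true_and] at hπ ⊢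
    obtain ⟨hw, hd⟩ := hπ
    obtain ⟨hge, hle, hdes⟩ := main_key h1 h2 π ((cond_iff h1 h2 π).mp hw)
    exact ⟨cond_trans h1 h2 π hw, by omega⟩

end QEuler
end

section
/- For every n and every subset decomposition: Σ over pairs (σ, p) where p is an increasing word on a subset S ⊆ [n] of size n−k and σ is a permutation of [n]∖S with lec(σ) = a and pix(σ) = j, weighted by q^{(inv−lec) of the concatenated object}, equals [n choose k]_q · A_{k,a}^{(j)}(q); summing over k gives the two-pix-permutation identity Σ_{v ∈ W_n(j), lec v = a} q^{(inv−lec)(v)} = Σ_{k≥1} [n choose k]_q A_{k,a}^{(j)}(q). -/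
namespace QEuler

theorem invL_append (u v : List ℕ) :
    invL (u ++ v) = invL u + invL v
      + (u.map (fun a => v.countP (fun b => decide (b < a)))).sum := by
  induction u with
  | nil => simp [invL]
  | cons a l ih =>
    simp only [List.cons_append, invL, List.append_eq, List.countP_append, ih, List.map_cons,
      List.sum_cons]
    ring

theorem invL_eq_zero_of_pairwise {w : List ℕ} (h : w.Pairwise (· < ·)) : invL w = 0 := by
  induction w with
  | nil => rfl
  | cons a l ih =>
    rw [List.pairwise_cons] at h
    have hc : l.countP (fun b => decide (b < a)) = 0 := by
      rw [List.countP_eq_zero]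
      intro b hb
      simpa using (h.1 b hb).not_gt
    simp [invL, hc, ih h.2]

theorem invL_map {w : List ℕ} {f : ℕ → ℕ}
    (hf : ∀ a ∈ w, ∀ b ∈ w, (f a < f b ↔ a < b)) : invL (w.map f) = invL w := by
  induction w with
  | nil => rfl
  | cons a l ih =>
    simp only [List.map_cons, invL]
    have h1 : (l.map f).countP (fun b => decide (b < f a)) =
        l.countP (fun b => decide (b < a)) := by
      rw [List.countP_map]
      refine List.countP_congr (fun b hb => ?_)
      simp [hf b (by simp [hb]) a (by simp)]
    rw [h1, ih (fun a ha b hb => hf a (by simp [ha]) b (by simp [hb]))]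

theorem descSet_map {w : List ℕ} {f : ℕ → ℕ}
    (hf : ∀ a ∈ w, ∀ b ∈ w, (f a < f b ↔ a < b)) : descSet (w.map f) = descSet w := by
  unfold descSet
  rw [List.length_map]
  refine List.filter_congr (fun i hi => ?_)
  rw [List.mem_range] at hi
  have h1 : i + 1 < w.length := by omega
  have h0 : i < w.length := by omega
  rw [List.getD_eq_getElem _ _ (by simpa using h1), List.getD_eq_getElem _ _ (by simpa using h0),
    List.getD_eq_getElem _ _ h1, List.getD_eq_getElem _ _ h0, List.getElem_map, List.getElem_map]
  simp [hf _ (List.getElem_mem _) _ (List.getElem_mem _)]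

theorem hookAux_map (f : ℕ → ℕ) : ∀ (fuel : ℕ) (w : List ℕ),
    (∀ a ∈ w, ∀ b ∈ w, (f a < f b ↔ a < b)) →
    hookAux fuel (w.map f) = ((hookAux fuel w).1.map f, (hookAux fuel w).2.map (List.map f))
  | 0, w, _ => rfl
  | fuel+1, w, hf => by
    have hld : lastDesc (w.map f) = lastDesc w := by
      unfold lastDesc; rw [descSet_map hf]
    simp only [hookAux, hld]
    cases h : lastDesc w with
    | none => rfl
    | some i =>
      have ih := hookAux_map f fuel (w.take i)
        (fun a ha b hb => hf a (List.mem_of_mem_take ha) b (List.mem_of_mem_take hb))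
      simp only [← List.map_take, ih, ← List.map_drop, List.map_append]
      rfl

theorem hookAux_join : ∀ (fuel : ℕ) (w : List ℕ),
    (hookAux fuel w).1 ++ (hookAux fuel w).2.flatten = w
  | 0, _ => by simp [hookAux]
  | fuel+1, w => by
    simp only [hookAux]
    cases h : lastDesc w with
    | none => simp
    | some i =>
      simp only [List.flatten_append, List.flatten_cons, List.flatten_nil, List.append_nil,
        ← List.append_assoc, hookAux_join fuel (w.take i), List.take_append_drop]

theorem lecL_map {w : List ℕ} {f : ℕ → ℕ}
    (hf : ∀ a ∈ w, ∀ b ∈ w, (f a < f b ↔ a < b)) : lecL (w.map f) = lecL w := by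
  unfold lecL hookFact
  rw [List.length_map, hookAux_map f w.length w hf]
  simp only [List.map_map]
  refine congrArg _ (List.map_congr_left (fun h hh => ?_))
  have hsub : ∀ a ∈ h, a ∈ w := by
    intro a ha
    have := hookAux_join w.length w
    have : a ∈ (hookAux w.length w).2.flatten := List.mem_flatten.2 ⟨h, hh, ha⟩
    rw [← hookAux_join w.length w]
    exact List.mem_append.2 (Or.inr this)
  exact invL_map (fun a ha b hb => hf a (hsub a ha) b (hsub b hb))

theorem pixL_map {w : List ℕ} {f : ℕ → ℕ}
    (hf : ∀ a ∈ w, ∀ b ∈ w, (f a < f b ↔ a < b)) : pixL (w.map f) = pixL w := by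
  unfold pixL hookFact
  rw [List.length_map, hookAux_map f w.length w hf, List.length_map]

theorem sum_invL_le_flatten : ∀ L : List (List ℕ), (L.map invL).sum ≤ invL L.flatten
  | [] => le_refl _
  | h :: L => by
    simp only [List.map_cons, List.sum_cons, List.flatten_cons, invL_append]
    have := sum_invL_le_flatten L
    omega

theorem lecL_le_invL (w : List ℕ) : lecL w ≤ invL w := by
  unfold lecL hookFact
  have h1 := sum_invL_le_flatten (hookAux w.length w).2
  have h2 : invL (hookAux w.length w).2.flatten ≤ invL w := by
    conv_rhs => rw [← hookAux_join w.length w]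
    rw [invL_append]; omega
  omega

def crossN (n : ℕ) (S : Finset ℕ) : ℕ :=
  ∑ s ∈ S, ((Finset.range n \ S).filter (· < s)).card

noncomputable def G (n k : ℕ) : Polynomial ℚ :=
  ∑ S ∈ (Finset.range n).powersetCard k, Polynomial.X ^ crossN n S

theorem G_zero (n : ℕ) : G n 0 = 1 := by
  simp [G, crossN]

theorem G_self (n : ℕ) : G n n = 1 := by
  have h := Finset.powersetCard_self (Finset.range n)
  rw [Finset.card_range] at h
  rw [G, h, Finset.sum_singleton]
  simp [crossN, Finset.sdiff_self]

theorem G_big {n k : ℕ} (h : n < k) : G n k = 0 := by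
  rw [G, Finset.powersetCard_eq_empty.2 (by simpa using h), Finset.sum_empty]

theorem G_rec (n m : ℕ) :
    G (n+1) (m+1) = G n (m+1) + Polynomial.X ^ (n-m) * G n m := by
  rcases lt_or_ge n m with h | hmn
  · rw [G_big (by omega), G_big (by omega), G_big h, mul_zero, add_zero]
  rw [G, Finset.range_add_one, Finset.powersetCard_succ_insert (Finset.notMem_range_self),
    Finset.sum_union, Finset.sum_image]
  · congr 1
    · -- subsets not containing n
      rw [G]
      refine Finset.sum_congr rfl (fun S hS => ?_)
      rw [Finset.mem_powersetCard] at hS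
      congr 1
      unfold crossN
      refine Finset.sum_congr rfl (fun s hs => ?_)
      congr 1
      rw [Finset.range_add_one, Finset.insert_sdiff_of_notMem _ (fun hn => Finset.notMem_range_self (hS.1 hn)),
        Finset.filter_insert]
      have hsn : s < n := Finset.mem_range.1 (hS.1 hs)
      rw [if_neg (by omega)]
    · -- subsets containing n
      rw [G, Finset.mul_sum]
      refine Finset.sum_congr rfl (fun S hS => ?_)
      rw [Finset.mem_powersetCard] at hS
      have hnS : n ∉ S := fun hn => Finset.notMem_range_self (hS.1 hn)
      rw [← pow_add]
      congr 1
      have hdiff : Finset.range (n+1) \ insert n S = Finset.range n \ S := by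
        ext x
        simp only [Finset.mem_sdiff, Finset.mem_insert, Finset.mem_range, not_or]
        constructor
        · rintro ⟨h1, h2, h3⟩
          exact ⟨by omega, h3⟩
        · rintro ⟨h1, h2⟩
          exact ⟨by omega, by omega, h2⟩
      unfold crossN
      rw [Finset.sum_insert hnS, hdiff]
      have hfull : (Finset.range n \ S).filter (· < n) = Finset.range n \ S := by
        refine Finset.filter_true_of_mem (fun x hx => ?_)
        exact Finset.mem_range.1 (Finset.mem_sdiff.1 hx).1
      rw [hfull, Finset.card_sdiff_of_subset hS.1, Finset.card_range, hS.2]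
      try omega
  · -- injectivity of insert n
    intro S hS T hT hST
    rw [Finset.mem_coe, Finset.mem_powersetCard] at hS hT
    have hnS : n ∉ S := fun hn => Finset.notMem_range_self (hS.1 hn)
    have hnT : n ∉ T := fun hn => Finset.notMem_range_self (hT.1 hn)
    rw [← Finset.erase_insert hnS, ← Finset.erase_insert hnT, hST]
  · -- disjoint
    rw [Finset.disjoint_left]
    intro S hS hS'
    rw [Finset.mem_powersetCard] at hS
    rcases Finset.mem_image.1 hS' with ⟨T, _, rfl⟩
    exact Finset.notMem_range_self (hS.1 (Finset.mem_insert_self n T))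

theorem qq_succ (n : ℕ) : qq (n+1) = qq n * (1 - Polynomial.X ^ (n+1)) := by
  rw [qq, Finset.prod_range_succ]; rfl

theorem qq_ne_zero (n : ℕ) : qq n ≠ 0 := by
  intro h
  have := congrArg (Polynomial.eval 0) h
  simp [qq, Polynomial.eval_prod] at this

theorem qq_mul_G : ∀ n k, k ≤ n → qq (n-k) * qq k * G n k = qq n := by
  intro n
  induction n with
  | zero => intro k hk; interval_cases k; simp [G_zero, qq]
  | succ n ih =>
    intro k hk
    match k with
    | 0 => simp [G_zero, qq]
    | m+1 =>
      rw [G_rec]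
      rcases eq_or_lt_of_le hk with h | h
      · -- m = n
        have hm : m = n := by omega
        subst hm
        rw [G_big (by omega), Nat.sub_self, zero_add, Nat.sub_self, G_self, qq_succ]
        simp [qq]
        try ring
      · have hm : m + 1 ≤ n := by omega
        have e1 : n + 1 - (m+1) = (n - (m+1)) + 1 := by omega
        have e2 : n - (m+1) + 1 = n - m := by omega
        rw [mul_add]
        have t1 : qq (n + 1 - (m+1)) * qq (m+1) * G n (m+1)
            = (1 - Polynomial.X ^ (n-m)) * qq n := by
          rw [e1, qq_succ, e2]
          have := ih (m+1) hm
          ring_nf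
          ring_nf at this
          linear_combination (1 - Polynomial.X ^ (n-m)) * this
        have t2 : qq (n + 1 - (m+1)) * qq (m+1) * (Polynomial.X ^ (n-m) * G n m)
            = Polynomial.X ^ (n-m) * (1 - Polynomial.X ^ (m+1)) * qq n := by
          rw [e1, e2, qq_succ (m)]
          have := ih m (by omega)
          have e3 : n + 1 - (m+1) = n - m := by omega
          rw [e3] at *
          linear_combination Polynomial.X ^ (n-m) * (1 - Polynomial.X ^ (m+1)) * this
        rw [t1, t2, qq_succ]
        have e4 : (n - m) + (m + 1) = n + 1 := by omega
        calc (1 - Polynomial.X ^ (n-m)) * qq n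
              + Polynomial.X ^ (n-m) * (1 - Polynomial.X ^ (m+1)) * qq n
            = (1 - Polynomial.X ^ ((n-m) + (m+1))) * qq n := by rw [pow_add]; ring
          _ = qq n * (1 - Polynomial.X ^ (n+1)) := by rw [e4]; ring

theorem qbinom_eq_G {n k : ℕ} (h : k ≤ n) : qbinom n k = G n k := by
  rw [qbinom, if_pos h, ← qq_mul_G n k h]
  exact mul_div_cancel_left₀ _ (mul_ne_zero (qq_ne_zero _) (qq_ne_zero _))

theorem cardSc {n k : ℕ} (S : Finset ℕ) (hS1 : S ⊆ Finset.range n) (hS2 : S.card = k) :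
    (Finset.range n \ S).card = n - k := by
  rw [Finset.card_sdiff_of_subset hS1, Finset.card_range, hS2]

theorem word_take {n k : ℕ} (hk : k ≤ n) (π : Equiv.Perm (Fin n)) :
    (word π).take k = List.ofFn (fun i : Fin k => ((π (Fin.castLE hk i)) : ℕ) + 1) := by
  apply List.ext_getElem
  · simp [word, hk]
  · intro i h1 h2
    simp only [word, List.getElem_take, List.getElem_ofFn]
    rfl

theorem word_drop {n k : ℕ} (hk : k ≤ n) (π : Equiv.Perm (Fin n)) :
    (word π).drop k =
      List.ofFn (fun j : Fin (n - k) => ((π ⟨k + j, by have := j.isLt; omega⟩) : ℕ) + 1) := by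
  apply List.ext_getElem
  · simp [word]
  · intro i h1 h2
    simp only [word, List.getElem_drop, List.getElem_ofFn]

theorem increasing_drop_iff {n k : ℕ} (hk : k ≤ n) (π : Equiv.Perm (Fin n)) :
    IncreasingL ((word π).drop k) ↔
      StrictMono (fun j : Fin (n - k) => ((π ⟨k + j, by have := j.isLt; omega⟩) : ℕ)) := by
  rw [IncreasingL, word_drop hk, List.Chain', List.isChain_iff_pairwise, List.pairwise_ofFn]
  constructor
  · intro h i j hij
    exact Nat.lt_of_add_lt_add_right (h hij)
  · intro h i j hij
    exact Nat.add_lt_add_right (h hij) 1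

def phiFun {n k : ℕ} (hk : k ≤ n) (S : Finset ℕ) (hS1 : S ⊆ Finset.range n) (hS2 : S.card = k)
    (σ : Equiv.Perm (Fin k)) : Fin n → Fin n := fun i =>
  if h : (i : ℕ) < k then
    ⟨S.orderEmbOfFin hS2 (σ ⟨i, h⟩), by
      have := hS1 (Finset.orderEmbOfFin_mem S hS2 (σ ⟨i, h⟩))
      simpa [Finset.mem_range] using this⟩
  else
    ⟨(Finset.range n \ S).orderEmbOfFin (cardSc S hS1 hS2) ⟨(i : ℕ) - k, by have := i.isLt; omega⟩, by
      have hm := Finset.orderEmbOfFin_mem (Finset.range n \ S) (cardSc S hS1 hS2)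
        ⟨(i : ℕ) - k, by have := i.isLt; omega⟩
      have := (Finset.mem_sdiff.1 hm).1
      simpa [Finset.mem_range] using this⟩

theorem phiFun_injective {n k : ℕ} (hk : k ≤ n) (S : Finset ℕ) (hS1 : S ⊆ Finset.range n)
    (hS2 : S.card = k) (σ : Equiv.Perm (Fin k)) :
    Function.Injective (phiFun hk S hS1 hS2 σ) := by
  intro i j hij
  unfold phiFun at hij
  split_ifs at hij with h1 h2 h2
  · have h3 : (S.orderEmbOfFin hS2) (σ ⟨i, h1⟩) = (S.orderEmbOfFin hS2) (σ ⟨j, h2⟩) :=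
      congrArg Fin.val hij
    have h4 := σ.injective ((S.orderEmbOfFin hS2).injective h3)
    have h5 := congrArg Fin.val h4
    exact Fin.ext h5
  · exfalso
    have h3 := congrArg Fin.val hij
    simp only at h3
    have hm1 := Finset.orderEmbOfFin_mem S hS2 (σ ⟨i, h1⟩)
    have hm2 := Finset.orderEmbOfFin_mem (Finset.range n \ S) (cardSc S hS1 hS2)
      ⟨(j : ℕ) - k, by have := j.isLt; omega⟩
    rw [← h3] at hm2
    exact (Finset.mem_sdiff.1 hm2).2 hm1
  · exfalso
    have h3 := congrArg Fin.val hij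
    simp only at h3
    have hm1 := Finset.orderEmbOfFin_mem S hS2 (σ ⟨j, h2⟩)
    have hm2 := Finset.orderEmbOfFin_mem (Finset.range n \ S) (cardSc S hS1 hS2)
      ⟨(i : ℕ) - k, by have := i.isLt; omega⟩
    rw [h3] at hm2
    exact (Finset.mem_sdiff.1 hm2).2 hm1
  · have h3 : ((Finset.range n \ S).orderEmbOfFin (cardSc S hS1 hS2))
        ⟨(i : ℕ) - k, by have := i.isLt; omega⟩ =
        ((Finset.range n \ S).orderEmbOfFin (cardSc S hS1 hS2))
        ⟨(j : ℕ) - k, by have := j.isLt; omega⟩ := congrArg Fin.val hij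
    have h4 := (Finset.orderEmbOfFin _ (cardSc S hS1 hS2)).injective h3
    have h5 := congrArg Fin.val h4
    simp only at h5
    exact Fin.ext (by omega)

noncomputable def Phi {n k : ℕ} (hk : k ≤ n) (S : Finset ℕ) (hS1 : S ⊆ Finset.range n) (hS2 : S.card = k)
    (σ : Equiv.Perm (Fin k)) : Equiv.Perm (Fin n) :=
  Equiv.ofBijective _ (Finite.injective_iff_bijective.1 (phiFun_injective hk S hS1 hS2 σ))

theorem Phi_apply_lt {n k : ℕ} (hk : k ≤ n) (S : Finset ℕ) (hS1 : S ⊆ Finset.range n)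
    (hS2 : S.card = k) (σ : Equiv.Perm (Fin k)) (x : Fin n) (hx : (x : ℕ) < k) :
    ((Phi hk S hS1 hS2 σ) x : ℕ) = S.orderEmbOfFin hS2 (σ ⟨x, hx⟩) := by
  show ((phiFun hk S hS1 hS2 σ x : Fin n) : ℕ) = _
  unfold phiFun
  rw [dif_pos hx]

theorem Phi_apply_ge {n k : ℕ} (hk : k ≤ n) (S : Finset ℕ) (hS1 : S ⊆ Finset.range n)
    (hS2 : S.card = k) (σ : Equiv.Perm (Fin k)) (x : Fin n) (hx : ¬ (x : ℕ) < k) :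
    ((Phi hk S hS1 hS2 σ) x : ℕ) =
      (Finset.range n \ S).orderEmbOfFin (cardSc S hS1 hS2)
        ⟨(x : ℕ) - k, by have := x.isLt; omega⟩ := by
  show ((phiFun hk S hS1 hS2 σ x : Fin n) : ℕ) = _
  unfold phiFun
  rw [dif_neg hx]

def fS {k : ℕ} (S : Finset ℕ) (hS2 : S.card = k) : ℕ → ℕ := fun m =>
  if h : m - 1 < k then S.orderEmbOfFin hS2 ⟨m - 1, h⟩ + 1 else m

theorem mem_word_bounds {k : ℕ} (σ : Equiv.Perm (Fin k)) {a : ℕ} (ha : a ∈ word σ) :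
    1 ≤ a ∧ a ≤ k := by
  rw [word, List.mem_ofFn] at ha
  rcases ha with ⟨i, rfl⟩
  exact ⟨Nat.le_add_left 1 _, (σ i).isLt⟩

theorem fS_prop {k : ℕ} (S : Finset ℕ) (hS2 : S.card = k) (σ : Equiv.Perm (Fin k)) :
    ∀ a ∈ word σ, ∀ b ∈ word σ, (fS S hS2 a < fS S hS2 b ↔ a < b) := by
  intro a ha b hb
  obtain ⟨ha1, hak⟩ := mem_word_bounds σ ha
  obtain ⟨hb1, hbk⟩ := mem_word_bounds σ hb
  unfold fS
  rw [dif_pos (by omega : a - 1 < k), dif_pos (by omega : b - 1 < k)]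
  rw [Nat.add_lt_add_iff_right, (S.orderEmbOfFin hS2).strictMono.lt_iff_lt, Fin.mk_lt_mk]
  omega

theorem fS_apply {k : ℕ} (S : Finset ℕ) (hS2 : S.card = k) (x : Fin k) :
    fS S hS2 ((x : ℕ) + 1) = S.orderEmbOfFin hS2 x + 1 := by
  unfold fS
  rw [dif_pos (by simpa using x.isLt)]
  exact congrArg (fun y => S.orderEmbOfFin hS2 y + 1)
    (Fin.ext (by simp) : (⟨(x : ℕ) + 1 - 1, by simp⟩ : Fin k) = x)

noncomputable def Phi' {n k : ℕ} (hk : k ≤ n) (S : Finset ℕ) (σ : Equiv.Perm (Fin k)) : Equiv.Perm (Fin n) :=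
  if h : S ⊆ Finset.range n ∧ S.card = k then Phi hk S h.1 h.2 σ else 1

theorem Phi'_eq {n k : ℕ} (hk : k ≤ n) (S : Finset ℕ) (hS1 : S ⊆ Finset.range n)
    (hS2 : S.card = k) (σ : Equiv.Perm (Fin k)) :
    Phi' hk S σ = Phi hk S hS1 hS2 σ := dif_pos ⟨hS1, hS2⟩

theorem take_phi {n k : ℕ} (hk : k ≤ n) (S : Finset ℕ) (hS1 : S ⊆ Finset.range n)
    (hS2 : S.card = k) (σ : Equiv.Perm (Fin k)) :
    (word (Phi' hk S σ)).take k = (word σ).map (fS S hS2) := by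
  rw [Phi'_eq hk S hS1 hS2 σ, word_take hk]
  apply List.ext_getElem
  · simp [word]
  · intro i h1 h2
    rw [List.length_ofFn] at h1
    simp only [List.getElem_ofFn, List.getElem_map, word]
    rw [Phi_apply_lt hk S hS1 hS2 σ _ (by simpa using h1), fS_apply]
    congr 3
    all_goals first | rfl | exact Fin.ext (by simp)

theorem drop_phi {n k : ℕ} (hk : k ≤ n) (S : Finset ℕ) (hS1 : S ⊆ Finset.range n)
    (hS2 : S.card = k) (σ : Equiv.Perm (Fin k)) :
    (word (Phi' hk S σ)).drop k =
      List.ofFn (fun jj : Fin (n - k) =>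
        ((Finset.range n \ S).orderEmbOfFin (cardSc S hS1 hS2) jj : ℕ) + 1) := by
  rw [Phi'_eq hk S hS1 hS2 σ, word_drop hk]
  congr 1
  funext jj
  rw [Phi_apply_ge hk S hS1 hS2 σ _ (by simp)]
  congr 2
  all_goals first | rfl | exact Fin.ext (by simp)

theorem inc_drop_phi {n k : ℕ} (hk : k ≤ n) (S : Finset ℕ) (hS1 : S ⊆ Finset.range n)
    (hS2 : S.card = k) (σ : Equiv.Perm (Fin k)) :
    IncreasingL ((word (Phi' hk S σ)).drop k) := by
  rw [IncreasingL, drop_phi hk S hS1 hS2 σ, List.Chain', List.isChain_iff_pairwise, List.pairwise_ofFn]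
  intro i j hij
  have := (Finset.orderEmbOfFin _ (cardSc S hS1 hS2)).strictMono hij
  omega

theorem lec_take_phi {n k : ℕ} (hk : k ≤ n) (S : Finset ℕ) (hS1 : S ⊆ Finset.range n)
    (hS2 : S.card = k) (σ : Equiv.Perm (Fin k)) :
    lecL ((word (Phi' hk S σ)).take k) = lecL (word σ) := by
  rw [take_phi hk S hS1 hS2 σ]
  exact lecL_map (fS_prop S hS2 σ)

theorem pix_take_phi {n k : ℕ} (hk : k ≤ n) (S : Finset ℕ) (hS1 : S ⊆ Finset.range n)
    (hS2 : S.card = k) (σ : Equiv.Perm (Fin k)) :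
    pixL ((word (Phi' hk S σ)).take k) = pixL (word σ) := by
  rw [take_phi hk S hS1 hS2 σ]
  exact pixL_map (fS_prop S hS2 σ)

theorem countP_eq_sum_map (p : ℕ → Bool) : ∀ l : List ℕ,
    l.countP p = (l.map (fun a => if p a then 1 else 0)).sum
  | [] => rfl
  | a :: l => by
    rw [List.countP_cons, List.map_cons, List.sum_cons, countP_eq_sum_map p l]
    split <;> omega

theorem countP_ofFn {m : ℕ} (g : Fin m → ℕ) (p : ℕ → Bool) :
    (List.ofFn g).countP p = (Finset.univ.filter (fun i => p (g i))).card := by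
  rw [countP_eq_sum_map, List.map_ofFn, List.sum_ofFn, Finset.card_filter]
  simp [Function.comp]

theorem cross_eq {n k : ℕ} (hk : k ≤ n) (S : Finset ℕ) (hS1 : S ⊆ Finset.range n)
    (hS2 : S.card = k) (σ : Equiv.Perm (Fin k)) :
    (((word (Phi' hk S σ)).take k).map
      (fun a => ((word (Phi' hk S σ)).drop k).countP (fun b => decide (b < a)))).sum
      = crossN n S := by
  rw [take_phi hk S hS1 hS2 σ, drop_phi hk S hS1 hS2 σ, List.map_map, word, List.map_ofFn,
    List.sum_ofFn]
  have step : ∀ x : Fin k,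
      ((List.ofFn (fun jj : Fin (n - k) =>
          ((Finset.range n \ S).orderEmbOfFin (cardSc S hS1 hS2) jj : ℕ) + 1)).countP
        (fun b => decide (b < fS S hS2 ((σ x : ℕ) + 1))))
      = ((Finset.range n \ S).filter (· < S.orderEmbOfFin hS2 (σ x))).card := by
    intro x
    rw [fS_apply, countP_ofFn]
    apply Finset.card_bij
      (fun jj _ => ((Finset.range n \ S).orderEmbOfFin (cardSc S hS1 hS2) jj : ℕ))
    · intro jj hjj
      rw [Finset.mem_filter] at hjj ⊢
      refine ⟨Finset.orderEmbOfFin_mem _ _ _, ?_⟩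
      have := hjj.2
      simp only [decide_eq_true_eq] at this
      omega
    · intro j1 h1 j2 h2 he
      exact (Finset.orderEmbOfFin _ (cardSc S hS1 hS2)).injective he
    · intro b hb
      rw [Finset.mem_filter] at hb
      have hbr : b ∈ Set.range ((Finset.range n \ S).orderEmbOfFin (cardSc S hS1 hS2)) := by
        rw [Finset.range_orderEmbOfFin]
        exact hb.1
      rcases hbr with ⟨jj, hjj⟩
      refine ⟨jj, ?_, hjj⟩
      rw [Finset.mem_filter]
      refine ⟨Finset.mem_univ _, ?_⟩
      simp only [decide_eq_true_eq]
      rw [hjj]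
      have := hb.2
      omega
  calc ∑ x : Fin k, ((fun a => (List.ofFn (fun jj : Fin (n - k) =>
          ((Finset.range n \ S).orderEmbOfFin (cardSc S hS1 hS2) jj : ℕ) + 1)).countP
        (fun b => decide (b < a))) ∘ fS S hS2 ∘ fun i => (σ i : ℕ) + 1) x
      = ∑ x : Fin k, ((Finset.range n \ S).filter (· < S.orderEmbOfFin hS2 (σ x))).card :=
        Finset.sum_congr rfl (fun x _ => step x)
    _ = ∑ y : Fin k, ((Finset.range n \ S).filter (· < S.orderEmbOfFin hS2 y)).card :=
        Equiv.sum_comp σ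
          (fun y => ((Finset.range n \ S).filter (· < S.orderEmbOfFin hS2 y)).card)
    _ = crossN n S := by
        unfold crossN
        refine Finset.sum_bij (fun y _ => S.orderEmbOfFin hS2 y) ?_ ?_ ?_ ?_
        · intro y _
          exact Finset.orderEmbOfFin_mem _ _ _
        · intro y1 _ y2 _ he
          exact (Finset.orderEmbOfFin _ hS2).injective he
        · intro s hs
          have hsr : s ∈ Set.range (S.orderEmbOfFin hS2) := by
            rw [Finset.range_orderEmbOfFin]
            exact hs
          rcases hsr with ⟨y, hy⟩
          exact ⟨y, Finset.mem_univ _, hy⟩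
        · intro y _
          rfl

theorem invL_word_phi {n k : ℕ} (hk : k ≤ n) (S : Finset ℕ) (hS1 : S ⊆ Finset.range n)
    (hS2 : S.card = k) (σ : Equiv.Perm (Fin k)) :
    invL (word (Phi' hk S σ)) = invL (word σ) + crossN n S := by
  conv_lhs => rw [← List.take_append_drop k (word (Phi' hk S σ))]
  rw [invL_append, cross_eq hk S hS1 hS2 σ]
  have h1 : invL ((word (Phi' hk S σ)).take k) = invL (word σ) := by
    rw [take_phi hk S hS1 hS2 σ]
    exact invL_map (fS_prop S hS2 σ)
  have h2 : invL ((word (Phi' hk S σ)).drop k) = 0 := by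
    rw [drop_phi hk S hS1 hS2 σ]
    apply invL_eq_zero_of_pairwise
    rw [List.pairwise_ofFn]
    intro i j hij
    have := (Finset.orderEmbOfFin _ (cardSc S hS1 hS2)).strictMono hij
    omega
  omega

theorem phi'_castLE {n k : ℕ} (hk : k ≤ n) (S : Finset ℕ) (hS1 : S ⊆ Finset.range n)
    (hS2 : S.card = k) (σ : Equiv.Perm (Fin k)) (x : Fin k) :
    ((Phi' hk S σ) (Fin.castLE hk x) : ℕ) = S.orderEmbOfFin hS2 (σ x) := by
  rw [Phi'_eq hk S hS1 hS2 σ]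
  rw [Phi_apply_lt hk S hS1 hS2 σ _ (by simpa using x.isLt)]
  congr 2
  all_goals first | rfl | exact Fin.ext rfl

theorem image_phi' {n k : ℕ} (hk : k ≤ n) (S : Finset ℕ) (hS1 : S ⊆ Finset.range n)
    (hS2 : S.card = k) (σ : Equiv.Perm (Fin k)) :
    Finset.image (fun x : Fin k => ((Phi' hk S σ) (Fin.castLE hk x) : ℕ)) Finset.univ = S := by
  ext s
  simp only [Finset.mem_image, Finset.mem_univ, true_and]
  constructor
  · rintro ⟨x, rfl⟩
    rw [phi'_castLE hk S hS1 hS2 σ x]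
    exact Finset.orderEmbOfFin_mem S hS2 (σ x)
  · intro hs
    have hsr : s ∈ Set.range (S.orderEmbOfFin hS2) := by
      rw [Finset.range_orderEmbOfFin]
      exact hs
    rcases hsr with ⟨y, hy⟩
    exact ⟨σ.symm y, by rw [phi'_castLE hk S hS1 hS2, Equiv.apply_symm_apply, hy]⟩

theorem sum_eq_qbinom (n j a k : ℕ) (hk : k ≤ n) :
    ∑ π ∈ Finset.univ.filter (fun π : Equiv.Perm (Fin n) =>
        IncreasingL ((word π).drop k) ∧
        lecL ((word π).take k) = a ∧ pixL ((word π).take k) = j),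
      (Polynomial.X : Polynomial ℚ) ^ (invL (word π) - lecL ((word π).take k)) =
    qbinom n k * Alecpix k a j := by
  rw [qbinom_eq_G hk, G, Alecpix, Finset.sum_mul_sum, ← Finset.sum_product']
  symm
  refine Finset.sum_bij (fun p _ => Phi' hk p.1 p.2) ?_ ?_ ?_ ?_
  · -- membership
    intro p hp
    obtain ⟨hA, hB⟩ := Finset.mem_product.1 hp
    obtain ⟨h1, h2⟩ := Finset.mem_powersetCard.1 hA
    rw [Finset.mem_filter] at hB ⊢
    obtain ⟨-, hlec, hpix⟩ := hB
    refine ⟨Finset.mem_univ _, inc_drop_phi hk p.1 h1 h2 p.2, ?_, ?_⟩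
    · rw [lec_take_phi hk p.1 h1 h2 p.2]
      exact hlec
    · rw [pix_take_phi hk p.1 h1 h2 p.2]
      exact hpix
  · -- injectivity
    rintro ⟨S1, σ1⟩ hp1 ⟨S2, σ2⟩ hp2 he
    obtain ⟨hA1, hB1⟩ := Finset.mem_product.1 hp1
    obtain ⟨h11, h12⟩ := Finset.mem_powersetCard.1 hA1
    obtain ⟨hA2, hB2⟩ := Finset.mem_product.1 hp2
    obtain ⟨h21, h22⟩ := Finset.mem_powersetCard.1 hA2
    simp only at he
    have hS : S1 = S2 := by
      rw [← image_phi' hk S1 h11 h12 σ1, ← image_phi' hk S2 h21 h22 σ2, he]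
    subst hS
    have hσ : σ1 = σ2 := by
      apply Equiv.ext
      intro x
      have e1 := phi'_castLE hk S1 h11 h12 σ1 x
      have e2 := phi'_castLE hk S1 h21 h22 σ2 x
      rw [he, e2] at e1
      exact (S1.orderEmbOfFin h12).injective (by rw [e1])
    rw [hσ]
  · -- surjectivity
    intro π hπ
    rw [Finset.mem_filter] at hπ
    obtain ⟨-, hInc, hlec, hpix⟩ := hπ
    have hinj : Function.Injective (fun i : Fin k => ((π (Fin.castLE hk i)) : ℕ)) := by
      intro x y hxy
      have h1 : π (Fin.castLE hk x) = π (Fin.castLE hk y) := Fin.ext hxy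
      have h2 := π.injective h1
      have h3 := congrArg Fin.val h2
      exact Fin.ext h3
    set S : Finset ℕ := Finset.image (fun i : Fin k => ((π (Fin.castLE hk i)) : ℕ)) Finset.univ
      with hSdef
    have hS2 : S.card = k := by
      rw [hSdef, Finset.card_image_of_injective _ hinj, Finset.card_univ, Fintype.card_fin]
    have hS1 : S ⊆ Finset.range n := by
      intro s hs
      rcases Finset.mem_image.1 hs with ⟨x, -, rfl⟩
      exact Finset.mem_range.2 (π _).isLt
    have hmemS : ∀ x : Fin k, ((π (Fin.castLE hk x)) : ℕ) ∈ S := fun x =>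
      Finset.mem_image_of_mem _ (Finset.mem_univ x)
    set τ : Fin k → Fin k := fun x =>
      (S.orderIsoOfFin hS2).symm ⟨((π (Fin.castLE hk x)) : ℕ), hmemS x⟩ with hτdef
    have hτinj : Function.Injective τ := by
      intro x y hxy
      rw [hτdef] at hxy
      have h1 := congrArg (fun z => ((S.orderIsoOfFin hS2) z : ℕ)) hxy
      simp only [OrderIso.apply_symm_apply] at h1
      exact hinj h1
    set σ : Equiv.Perm (Fin k) := Equiv.ofBijective τ (Finite.injective_iff_bijective.1 hτinj)
      with hσdef
    have key : ∀ x : Fin k, S.orderEmbOfFin hS2 (σ x) = ((π (Fin.castLE hk x)) : ℕ) := by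
      intro x
      show S.orderEmbOfFin hS2 (τ x) = _
      rw [hτdef, ← Finset.coe_orderIsoOfFin_apply, OrderIso.apply_symm_apply]
    have htake : (word π).take k = (word σ).map (fS S hS2) := by
      rw [word_take hk]
      apply List.ext_getElem
      · simp [word]
      · intro i hl1 hl2
        rw [List.length_ofFn] at hl1
        simp only [List.getElem_ofFn, List.getElem_map, word]
        rw [fS_apply, key]
    refine ⟨(S, σ), ?_, ?_⟩
    · rw [Finset.mem_product]
      refine ⟨Finset.mem_powersetCard.2 ⟨hS1, hS2⟩, ?_⟩
      rw [Finset.mem_filter]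
      refine ⟨Finset.mem_univ _, ?_, ?_⟩
      · show lec σ = a
        rw [lec, ← lecL_map (fS_prop S hS2 σ), ← htake]
        exact hlec
      · show pix σ = j
        rw [pix, ← pixL_map (fS_prop S hS2 σ), ← htake]
        exact hpix
    · show Phi' hk S σ = π
      rw [Phi'_eq hk S hS1 hS2 σ]
      apply Equiv.ext
      intro x
      apply Fin.ext
      by_cases hx : (x : ℕ) < k
      · rw [Phi_apply_lt hk S hS1 hS2 σ x hx, key]
        exact congrArg (fun z => ((π z : Fin n) : ℕ)) (Fin.ext rfl)
      · rw [Phi_apply_ge hk S hS1 hS2 σ x hx]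
        have hgC : (fun jj : Fin (n - k) =>
            ((π ⟨k + jj, by have := jj.isLt; omega⟩ : Fin n) : ℕ))
            = (Finset.range n \ S).orderEmbOfFin (cardSc S hS1 hS2) := by
          apply Finset.orderEmbOfFin_unique
          · intro jj
            rw [Finset.mem_sdiff]
            constructor
            · exact Finset.mem_range.2 (π _).isLt
            · intro hmem
              rcases Finset.mem_image.1 hmem with ⟨y, -, hy⟩
              have h1 : π (Fin.castLE hk y) = π ⟨k + jj, by have := jj.isLt; omega⟩ :=
                Fin.ext hy
              have h2 := congrArg Fin.val (π.injective h1)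
              simp only [Fin.coe_castLE] at h2
              have := y.isLt
              omega
          · exact (increasing_drop_iff hk π).1 hInc
        rw [← hgC]
        have hxk : k + ((x : ℕ) - k) = (x : ℕ) := by omega
        exact congrArg (fun z => ((π z : Fin n) : ℕ)) (Fin.ext (by simpa using hxk))
  · -- weights
    intro p hp
    obtain ⟨hA, hB⟩ := Finset.mem_product.1 hp
    obtain ⟨h1, h2⟩ := Finset.mem_powersetCard.1 hA
    rw [invL_word_phi hk p.1 h1 h2 p.2, lec_take_phi hk p.1 h1 h2 p.2, ← pow_add]
    congr 1
    rw [inv, lec]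
    have := lecL_le_invL (word p.2)
    omega


/-- Two-pix-permutation identity: a two-pix-permutation of `[n]` is encoded as a pair
`(π, k)` where the word of `π ∈ S_n` splits as `w₁ = (word π).take k` (the part
`p₁τ₁⋯τ_r`, with `pix w₁ = j`) and the increasing word `p₂ = (word π).drop k`; its weight
is `q^{inv(word π) − lec(w₁)}`. The refined identity gives `[n,k]_q · A_{k,a}^{(j)}(q)`,
and summing over `k` gives `Σ_{v ∈ W_n(j), lec v = a} q^{(inv−lec)v} = Σ_k [n,k]_q A_{k,a}^{(j)}(q)`. -/
theorem two_pix_permutation_identity (n j a : ℕ) :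
    (∀ k ≤ n,
      ∑ π ∈ Finset.univ.filter (fun π : Equiv.Perm (Fin n) =>
          IncreasingL ((word π).drop k) ∧
          lecL ((word π).take k) = a ∧ pixL ((word π).take k) = j),
        (Polynomial.X : Polynomial ℚ) ^ (invL (word π) - lecL ((word π).take k)) =
      qbinom n k * Alecpix k a j)
    ∧
    (∑ k ∈ Finset.Icc 1 n,
        ∑ π ∈ Finset.univ.filter (fun π : Equiv.Perm (Fin n) =>
            IncreasingL ((word π).drop k) ∧
            lecL ((word π).take k) = a ∧ pixL ((word π).take k) = j),
          (Polynomial.X : Polynomial ℚ) ^ (invL (word π) - lecL ((word π).take k)) =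
      ∑ k ∈ Finset.Icc 1 n, qbinom n k * Alecpix k a j) := by
  refine ⟨fun k hk => sum_eq_qbinom n j a k hk, ?_⟩
  exact Finset.sum_congr rfl (fun k hk => sum_eq_qbinom n j a k (Finset.mem_Icc.1 hk).2)

end QEuler
end
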